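/- arXiv:1709.00589 — 4 statements merged into one kernel-verified Lean document; each statement's English description precedes it below -/
import Mathlib

section
/- For every finite simple graph G on n ≥ 1 vertices and every integer r ≥ 2, the r-ASC index of G satisfies θ_r(G) ≤ 2r. -/
namespace AscPaper

open SimpleGraph

/-- The eccentricity of a vertex `u` in a graph `G`, as an extended natural number:
the supremum of distances from `u` to all vertices. -/
noncomputable def ecc {V : Type*} (G : SimpleGraph V) (u : V) : ℕ∞ :=
  ⨆ v, G.edist u v

/-- The radius of a graph: the minimum eccentricity over all vertices. -/
noncomputable def graphRadius {V : Type*} (G : SimpleGraph V) : ℕ∞ :=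
  ⨅ u, ecc G u

/-- The diameter of a graph: the maximum eccentricity over all vertices. -/
noncomputable def graphDiam {V : Type*} (G : SimpleGraph V) : ℕ∞ :=
  ⨆ u, ecc G u

/-- The eccentric set of `u`: all vertices at distance exactly `ecc G u` from `u`. -/
def eccSet {V : Type*} (G : SimpleGraph V) (u : V) : Set V :=
  {v | G.edist u v = ecc G u}

/-- `H` is an `r`-ASC (almost self-centered) graph: `H` is connected, has radius `r`,
and all but exactly two vertices are central (have eccentricity equal to the radius). -/
def IsASC {V : Type*} (r : ℕ) (H : SimpleGraph V) : Prop :=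
  H.Connected ∧ graphRadius H = (r : ℕ∞) ∧
    {u : V | ecc H u ≠ graphRadius H}.ncard = 2

/-- The `r`-ASC index of a graph `G`: the minimum number `k` of vertices that need to be
added to `G` so that the resulting graph is an `r`-ASC graph containing `G` as an
induced subgraph. -/
noncomputable def theta {V : Type*} (r : ℕ) (G : SimpleGraph V) : ℕ :=
  sInf {k : ℕ | ∃ H : SimpleGraph (V ⊕ Fin k), IsASC r H ∧
    ∀ u v : V, H.Adj (Sum.inl u) (Sum.inl v) ↔ G.Adj u v}

section Construction

open Sum

variable {V : Type*}

def Hg (G : SimpleGraph V) (r : ℕ) : SimpleGraph (V ⊕ Fin (2*r)) where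
  Adj x y :=
    match x, y with
    | inl u, inl v => G.Adj u v
    | inl _, inr k => (k : ℕ) = 0 ∨ (k : ℕ) = 2*r - 2
    | inr k, inl _ => (k : ℕ) = 0 ∨ (k : ℕ) = 2*r - 2
    | inr k, inr l => (k : ℕ) + 1 = l ∨ (l : ℕ) + 1 = k
  symm := by
    constructor
    rintro (u|k) (v|l) h
    · exact G.adj_symm h
    · exact h
    · exact h
    · exact h.symm
  loopless := by
    constructor
    rintro (u|k) h
    · exact G.loopless.irrefl u h
    · rcases h with h | h <;> omega

/-- position on the virtual cycle of length `2r` (all of `V` sits at position `0`,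
the pendant vertex `z_{2r-1}` shares position `2r-1` with `z_{2r-2}`). -/
def posn (r : ℕ) : V ⊕ Fin (2*r) → ℕ :=
  fun x => match x with
  | inl _ => 0
  | inr k => min ((k : ℕ) + 1) (2*r - 1)

/-- cyclic distance on `Z_{2r}`. -/
def cdist (r a b : ℕ) : ℕ := min (max a b - min a b) (2*r - (max a b - min a b))

lemma cyc_lip (G : SimpleGraph V) (r : ℕ) (hr : 2 ≤ r) (t : ℕ) (ht : t < 2*r) :
    ∀ a b, (Hg G r).Adj a b → cdist r (posn r a) t ≤ cdist r (posn r b) t + 1 := by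
  rintro (u|k) (v|l) h
  · simp [posn]
  · have hl := l.2
    rcases h with h | h <;> simp only [posn, cdist, h] <;> omega
  · have hk := k.2
    rcases h with h | h <;> simp only [posn, cdist, h] <;> omega
  · have hk := k.2
    have hl := l.2
    rcases h with h | h <;> simp only [posn, cdist] <;> omega

/-- potential measuring distance to the pendant vertex `z_{2r-1}`. -/
def hpot (r : ℕ) : V ⊕ Fin (2*r) → ℕ :=
  fun x => match x with
  | inl _ => 2
  | inr k => if (k : ℕ) = 2*r - 1 then 0 else min (2*r - 1 - (k : ℕ)) ((k : ℕ) + 3)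

lemma hpot_lip (G : SimpleGraph V) (r : ℕ) (hr : 2 ≤ r) :
    ∀ a b, (Hg G r).Adj a b → hpot r a ≤ hpot r b + 1 := by
  rintro (u|k) (v|l) h
  · simp [hpot]
  · have hl := l.2
    rcases h with h | h <;> simp only [hpot, h] <;> split_ifs <;> omega
  · have hk := k.2
    rcases h with h | h <;> simp only [hpot, h] <;> split_ifs <;> omega
  · have hk := k.2
    have hl := l.2
    rcases h with h | h <;> simp only [hpot] <;> split_ifs <;> omega


lemma adj_path (G : SimpleGraph V) (r : ℕ) (k : ℕ) (h : k + 1 < 2*r) :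
    (Hg G r).Adj (inr ⟨k, by omega⟩) (inr ⟨k+1, h⟩) := Or.inl rfl

lemma adj_hub0 (G : SimpleGraph V) (r : ℕ) (hr : 2 ≤ r) (v : V) :
    (Hg G r).Adj (inl v) (inr ⟨0, by omega⟩) := Or.inl rfl

lemma adj_hub2 (G : SimpleGraph V) (r : ℕ) (hr : 2 ≤ r) (v : V) :
    (Hg G r).Adj (inl v) (inr ⟨2*r - 2, by omega⟩) := Or.inr rfl

lemma adj_pend (G : SimpleGraph V) (r : ℕ) (hr : 2 ≤ r) :
    (Hg G r).Adj (inr ⟨2*r - 2, by omega⟩) (inr ⟨2*r - 1, by omega⟩) :=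
  Or.inl (by simp; omega)

lemma edist_trans_le' {W : Type*} (H : SimpleGraph W) {a b c : W} {m n p : ℕ}
    (h1 : H.edist a b ≤ (m : ℕ∞)) (h2 : H.edist b c ≤ (n : ℕ∞)) (h : m + n ≤ p) :
    H.edist a c ≤ (p : ℕ∞) := by
  calc H.edist a c ≤ H.edist a b + H.edist b c := H.edist_triangle
    _ ≤ (m : ℕ∞) + (n : ℕ∞) := add_le_add h1 h2
    _ ≤ (p : ℕ∞) := by exact_mod_cast h

lemma edist_le_one_of_adj {W : Type*} {H : SimpleGraph W} {a b : W} (h : H.Adj a b) :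
    H.edist a b ≤ ((1 : ℕ) : ℕ∞) := by
  have := (edist_eq_one_iff_adj (G := H)).mpr h
  rw [this]; simp

lemma path_le (G : SimpleGraph V) (r : ℕ) (d : ℕ) : ∀ (k : ℕ) (h : k + d < 2*r),
    (Hg G r).edist (inr ⟨k, by omega⟩) (inr ⟨k + d, h⟩) ≤ (d : ℕ∞) := by
  induction d with
  | zero =>
    intro k h
    have : (Hg G r).edist (inr ⟨k, by omega⟩) (inr ⟨k + 0, h⟩) = 0 := by
      convert edist_self (G := Hg G r) (v := (inr ⟨k, by omega⟩ : V ⊕ Fin (2*r))) <;> rfl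
    simp [this]
  | succ d ih =>
    intro k h
    have h1 : k + d < 2*r := by omega
    have h2 := adj_path G r (k + d) (by omega)
    exact edist_trans_le' (Hg G r) (ih k h1) (edist_le_one_of_adj h2) (by omega)


lemma le_edist_of_lip {W : Type*} (H : SimpleGraph W) (f : W → ℕ)
    (hf : ∀ a b, H.Adj a b → f a ≤ f b + 1) (x y : W) :
    (f x : ℕ∞) ≤ (f y : ℕ∞) + H.edist x y := by
  rcases eq_or_ne (H.edist x y) ⊤ with h | h
  · simp [h]
  · obtain ⟨p, hp⟩ := exists_walk_of_edist_ne_top h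
    rw [← hp]
    have key : ∀ {a b : W} (q : H.Walk a b), f a ≤ f b + q.length := by
      intro a b q
      induction q with
      | nil => simp
      | cons hadj q ih =>
        have := hf _ _ hadj
        simp only [Walk.length_cons]
        omega
    calc (f x : ℕ∞) ≤ ((f y + p.length : ℕ) : ℕ∞) := by exact_mod_cast key p
      _ = (f y : ℕ∞) + (p.length : ℕ∞) := by push_cast; ring

/-- upper bound between two `G`-vertices. -/
lemma ub_inl_inl (G : SimpleGraph V) (r : ℕ) (hr : 2 ≤ r) (v w : V) :
    (Hg G r).edist (inl v) (inl w) ≤ ((2 : ℕ) : ℕ∞) := by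
  rcases eq_or_ne v w with rfl | hvw
  · simp [edist_self]
  · exact edist_trans_le' (Hg G r) (edist_le_one_of_adj (adj_hub0 G r hr v))
      (edist_le_one_of_adj ((Hg G r).adj_symm (adj_hub0 G r hr w))) (by omega)

/-- upper bound from a `G`-vertex to any added vertex. -/
lemma ub_inl_inr (G : SimpleGraph V) (r : ℕ) (hr : 2 ≤ r) (v : V) (k : Fin (2*r)) :
    (Hg G r).edist (inl v) (inr k) ≤ (r : ℕ∞) := by
  have hk := k.2
  have hkk : k = ⟨(k : ℕ), hk⟩ := rfl
  rcases le_or_gt (k : ℕ) (r - 1) with h1 | h1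
  · -- via hub z_0
    have hp := path_le G r (k : ℕ) 0 (by omega)
    rw [hkk]
    exact edist_trans_le' (Hg G r) (edist_le_one_of_adj (adj_hub0 G r hr v))
      (by simpa using hp) (by omega)
  · rcases eq_or_ne (k : ℕ) (2*r - 1) with h2 | h2
    · -- via hub z_{2r-2} then pendant
      have : (inr ⟨2*r - 1, by omega⟩ : V ⊕ Fin (2*r)) = inr k :=
        congrArg _ (Fin.ext h2.symm)
      rw [← this]
      exact edist_trans_le' (Hg G r) (edist_le_one_of_adj (adj_hub2 G r hr v))
        (edist_le_one_of_adj (adj_pend G r hr)) (by omega)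
    · -- via hub z_{2r-2} going back
      have hp := path_le G r (2*r - 2 - (k : ℕ)) (k : ℕ) (by omega)
      have heq : (inr ⟨(k : ℕ) + (2*r - 2 - (k : ℕ)), by omega⟩ : V ⊕ Fin (2*r))
          = inr ⟨2*r - 2, by omega⟩ := congrArg _ (Fin.ext (by simp; omega))
      rw [heq] at hp
      rw [hkk]
      exact edist_trans_le' (Hg G r) (edist_le_one_of_adj (adj_hub2 G r hr v))
        ((edist_comm (G := Hg G r)) ▸ hp) (by omega)


lemma inr_mk_eq {r : ℕ} (a b : ℕ) (ha : a < 2*r) (hb : b < 2*r) (h : a = b) :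
    (inr ⟨a, ha⟩ : V ⊕ Fin (2*r)) = inr ⟨b, hb⟩ := by subst h; rfl

lemma ub_inr_inr_aux (G : SimpleGraph V) (r : ℕ) (hr : 2 ≤ r) [Nonempty V]
    (k l : Fin (2*r)) (hkl : (k : ℕ) ≤ (l : ℕ))
    (h : ¬((k : ℕ) = r - 2 ∧ (l : ℕ) = 2*r - 1)) :
    (Hg G r).edist (inr k) (inr l) ≤ (r : ℕ∞) := by
  obtain ⟨v0⟩ := ‹Nonempty V›
  have hk := k.2
  have hl := l.2
  -- the direct path bound
  have hdirect : (Hg G r).edist (inr k) (inr l) ≤ (((l : ℕ) - (k : ℕ) : ℕ) : ℕ∞) := by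
    have hp := path_le G r ((l : ℕ) - (k : ℕ)) (k : ℕ) (by omega)
    rw [inr_mk_eq ((k : ℕ) + ((l : ℕ) - (k : ℕ))) (l : ℕ) (by omega) hl (by omega)] at hp
    exact hp
  rcases le_or_gt ((l : ℕ) - (k : ℕ)) r with h1 | h1
  · exact le_trans hdirect (by exact_mod_cast h1)
  · -- the roundabout route through `V`
    have ha0 : (Hg G r).edist (inr k) (inr ⟨0, by omega⟩) ≤ (((k : ℕ) : ℕ) : ℕ∞) := by
      have hp := path_le G r (k : ℕ) 0 (by omega)
      rw [inr_mk_eq (0 + (k : ℕ)) (k : ℕ) (by omega) hk (by omega),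
        SimpleGraph.edist_comm] at hp
      exact hp
    have ha1 : (Hg G r).edist (inr ⟨0, by omega⟩) (inl v0) ≤ ((1 : ℕ) : ℕ∞) :=
      edist_le_one_of_adj ((Hg G r).adj_symm (adj_hub0 G r hr v0))
    have ha2 : (Hg G r).edist (inl v0) (inr ⟨2*r - 2, by omega⟩) ≤ ((1 : ℕ) : ℕ∞) :=
      edist_le_one_of_adj (adj_hub2 G r hr v0)
    rcases eq_or_ne (l : ℕ) (2*r - 1) with h2 | h2
    · -- `l` is the pendant vertex; since not the special pair, `k ≤ r-3` here
      have hk3 : (k : ℕ) ≤ r - 3 := by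
        rcases eq_or_ne (k : ℕ) (r - 2) with h3 | h3
        · exact absurd ⟨h3, h2⟩ h
        · omega
      have ha3 : (Hg G r).edist (inr ⟨2*r - 2, by omega⟩) (inr l) ≤ ((1 : ℕ) : ℕ∞) := by
        have hp := edist_le_one_of_adj (adj_pend G r hr)
        rw [inr_mk_eq (2*r - 1) (l : ℕ) (by omega) hl (by omega)] at hp
        exact hp
      exact edist_trans_le' (Hg G r) ha0
        (edist_trans_le' (Hg G r) ha1 (edist_trans_le' (Hg G r) ha2 ha3 le_rfl) le_rfl)
        (by omega)
    · -- `l ≤ 2r-2`: go around through both hubs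
      have ha3 : (Hg G r).edist (inr ⟨2*r - 2, by omega⟩) (inr l) ≤
          ((2*r - 2 - (l : ℕ) : ℕ) : ℕ∞) := by
        have hp := path_le G r (2*r - 2 - (l : ℕ)) (l : ℕ) (by omega)
        rw [inr_mk_eq ((l : ℕ) + (2*r - 2 - (l : ℕ))) (2*r - 2) (by omega) (by omega)
          (by omega), SimpleGraph.edist_comm] at hp
        exact hp
      exact edist_trans_le' (Hg G r) ha0
        (edist_trans_le' (Hg G r) ha1 (edist_trans_le' (Hg G r) ha2 ha3 le_rfl) le_rfl)
        (by omega)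

lemma ub_inr_inr (G : SimpleGraph V) (r : ℕ) (hr : 2 ≤ r) [Nonempty V]
    (k l : Fin (2*r))
    (h : ¬((k : ℕ) = r - 2 ∧ (l : ℕ) = 2*r - 1) ∧ ¬((k : ℕ) = 2*r - 1 ∧ (l : ℕ) = r - 2)) :
    (Hg G r).edist (inr k) (inr l) ≤ (r : ℕ∞) := by
  rcases le_total (k : ℕ) (l : ℕ) with hkl | hkl
  · exact ub_inr_inr_aux G r hr k l hkl h.1
  · rw [SimpleGraph.edist_comm]
    exact ub_inr_inr_aux G r hr l k hkl (by tauto)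


lemma reach_lower (G : SimpleGraph V) (r : ℕ) (hr : 2 ≤ r)
    (x y : V ⊕ Fin (2*r)) (t : ℕ) (ht : t < 2*r)
    (hy : posn r y = t) (hx : cdist r (posn r x) t = r) :
    (r : ℕ∞) ≤ (Hg G r).edist x y := by
  have hlip := le_edist_of_lip (Hg G r) (fun w => cdist r (posn r w) t)
    (cyc_lip G r hr t ht) x y
  rw [hx, hy] at hlip
  have h0 : cdist r t t = 0 := by simp [cdist]
  rw [h0] at hlip
  simpa using hlip

lemma low_ecc (G : SimpleGraph V) (r : ℕ) (hr : 2 ≤ r) [Nonempty V]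
    (u : V ⊕ Fin (2*r)) : (r : ℕ∞) ≤ ecc (Hg G r) u := by
  obtain ⟨v0⟩ := ‹Nonempty V›
  rcases u with v | k
  · refine le_trans (reach_lower G r hr (inl v) (inr ⟨r - 1, by omega⟩) r (by omega) ?_ ?_)
      (le_iSup (fun y => (Hg G r).edist (inl v) y) _)
    · simp only [posn]; omega
    · simp only [posn, cdist]; omega
  · have hk := k.2
    rcases le_or_gt r (min ((k : ℕ) + 1) (2*r - 1)) with h1 | h1
    · rcases eq_or_lt_of_le h1 with h2 | h2
      · refine le_trans (reach_lower G r hr (inr k) (inl v0) 0 (by omega) ?_ ?_)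
          (le_iSup (fun y => (Hg G r).edist (inr k) y) _)
        · simp [posn]
        · simp only [posn, cdist]; omega
      · refine le_trans (reach_lower G r hr (inr k)
          (inr ⟨min ((k : ℕ) + 1) (2*r - 1) - r - 1, by omega⟩)
          (min ((k : ℕ) + 1) (2*r - 1) - r) (by omega) ?_ ?_)
          (le_iSup (fun y => (Hg G r).edist (inr k) y) _)
        · simp only [posn]; omega
        · simp only [posn, cdist]; omega
    · refine le_trans (reach_lower G r hr (inr k)
        (inr ⟨min ((k : ℕ) + 1) (2*r - 1) + r - 1, by omega⟩)
        (min ((k : ℕ) + 1) (2*r - 1) + r) (by omega) ?_ ?_)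
        (le_iSup (fun y => (Hg G r).edist (inr k) y) _)
      · simp only [posn]; omega
      · simp only [posn, cdist]; omega

lemma special_lower (G : SimpleGraph V) (r : ℕ) (hr : 2 ≤ r) :
    ((r + 1 : ℕ) : ℕ∞) ≤
      (Hg G r).edist (inr ⟨r - 2, by omega⟩) (inr ⟨2*r - 1, by omega⟩) := by
  have hlip := le_edist_of_lip (Hg G r) (hpot r) (hpot_lip G r hr)
    (inr ⟨r - 2, by omega⟩) (inr ⟨2*r - 1, by omega⟩)
  have h1 : hpot r (inr ⟨r - 2, by omega⟩ : V ⊕ Fin (2*r)) = r + 1 := by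
    simp only [hpot]
    split_ifs with h <;> omega
  have h2 : hpot r (inr ⟨2*r - 1, by omega⟩ : V ⊕ Fin (2*r)) = 0 := by
    simp [hpot]
  rw [h1, h2] at hlip
  simpa using hlip


lemma ecc_inl_eq (G : SimpleGraph V) (r : ℕ) (hr : 2 ≤ r) [Nonempty V] (v : V) :
    ecc (Hg G r) (inl v) = (r : ℕ∞) := by
  refine le_antisymm (iSup_le ?_) (low_ecc G r hr _)
  rintro (w | k)
  · exact le_trans (ub_inl_inl G r hr v w) (by exact_mod_cast hr)
  · exact ub_inl_inr G r hr v k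

lemma ecc_inr_eq (G : SimpleGraph V) (r : ℕ) (hr : 2 ≤ r) [Nonempty V] (k : Fin (2*r))
    (h1 : (k : ℕ) ≠ r - 2) (h2 : (k : ℕ) ≠ 2*r - 1) :
    ecc (Hg G r) (inr k) = (r : ℕ∞) := by
  refine le_antisymm (iSup_le ?_) (low_ecc G r hr _)
  rintro (w | l)
  · rw [SimpleGraph.edist_comm]
    exact ub_inl_inr G r hr w k
  · exact ub_inr_inr G r hr k l ⟨fun hc => h1 hc.1, fun hc => h2 hc.1⟩

lemma ecc_special1 (G : SimpleGraph V) (r : ℕ) (hr : 2 ≤ r) :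
    ¬ ecc (Hg G r) (inr ⟨r - 2, by omega⟩) = (r : ℕ∞) := by
  intro heq
  have h1 : ((r + 1 : ℕ) : ℕ∞) ≤ ecc (Hg G r) (inr ⟨r - 2, by omega⟩) :=
    le_trans (special_lower G r hr)
      (le_iSup (fun y => (Hg G r).edist (inr ⟨r - 2, by omega⟩) y) _)
  rw [heq] at h1
  have : r + 1 ≤ r := by exact_mod_cast h1
  omega

lemma ecc_special2 (G : SimpleGraph V) (r : ℕ) (hr : 2 ≤ r) :
    ¬ ecc (Hg G r) (inr ⟨2*r - 1, by omega⟩) = (r : ℕ∞) := by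
  intro heq
  have h1 : ((r + 1 : ℕ) : ℕ∞) ≤ ecc (Hg G r) (inr ⟨2*r - 1, by omega⟩) := by
    refine le_trans ?_ (le_iSup (fun y => (Hg G r).edist (inr ⟨2*r - 1, by omega⟩) y)
      (inr ⟨r - 2, by omega⟩))
    rw [SimpleGraph.edist_comm]
    exact special_lower G r hr
  rw [heq] at h1
  have : r + 1 ≤ r := by exact_mod_cast h1
  omega

lemma radius_eq (G : SimpleGraph V) (r : ℕ) (hr : 2 ≤ r) [Nonempty V] :
    graphRadius (Hg G r) = (r : ℕ∞) := by
  obtain ⟨v0⟩ := ‹Nonempty V›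
  refine le_antisymm ?_ (le_iInf fun u => low_ecc G r hr u)
  calc graphRadius (Hg G r) ≤ ecc (Hg G r) (inl v0) := iInf_le _ _
    _ = (r : ℕ∞) := ecc_inl_eq G r hr v0

lemma connected_Hg (G : SimpleGraph V) (r : ℕ) (hr : 2 ≤ r) [Nonempty V] :
    (Hg G r).Connected := by
  obtain ⟨v0⟩ := ‹Nonempty V›
  have hre : ∀ a, (Hg G r).Reachable (inl v0) a := by
    intro a
    apply reachable_of_edist_ne_top
    rcases a with w | k
    · exact ne_top_of_le_ne_top (ENat.coe_ne_top 2) (ub_inl_inl G r hr v0 w)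
    · exact ne_top_of_le_ne_top (ENat.coe_ne_top r) (ub_inl_inr G r hr v0 k)
  rw [connected_iff]
  exact ⟨fun a b => (hre a).symm.trans (hre b), ⟨inl v0⟩⟩

lemma noncentral_set (G : SimpleGraph V) (r : ℕ) (hr : 2 ≤ r) [Nonempty V] :
    {u : V ⊕ Fin (2*r) | ecc (Hg G r) u ≠ graphRadius (Hg G r)}
      = {inr ⟨r - 2, by omega⟩, inr ⟨2*r - 1, by omega⟩} := by
  ext u
  simp only [Set.mem_setOf_eq, Set.mem_insert_iff, Set.mem_singleton_iff,
    radius_eq G r hr]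
  constructor
  · intro hne
    rcases u with v | k
    · exact absurd (ecc_inl_eq G r hr v) hne
    · rcases eq_or_ne (k : ℕ) (r - 2) with h1 | h1
      · exact Or.inl (congrArg inr (Fin.ext h1))
      · rcases eq_or_ne (k : ℕ) (2*r - 1) with h2 | h2
        · exact Or.inr (congrArg inr (Fin.ext h2))
        · exact absurd (ecc_inr_eq G r hr k h1 h2) hne
  · rintro (rfl | rfl)
    · exact ecc_special1 G r hr
    · exact ecc_special2 G r hr


end Construction

/-- For every finite simple graph `G` on `n ≥ 1` vertices and every integer `r ≥ 2`,
the `r`-ASC index of `G` satisfies `θ_r(G) ≤ 2r`. -/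
theorem theta_le_two_mul {V : Type*} [Fintype V] [Nonempty V]
    (G : SimpleGraph V) (r : ℕ) (hr : 2 ≤ r) :
    theta r G ≤ 2 * r := by
  apply Nat.sInf_le
  refine ⟨Hg G r, ⟨connected_Hg G r hr, radius_eq G r hr, ?_⟩, fun u v => Iff.rfl⟩
  rw [noncentral_set G r hr]
  exact Set.ncard_pair (by simp only [ne_eq, Sum.inr.injEq, Fin.mk.injEq]; omega)

end AscPaper
end

section
/- For every connected finite simple graph G of order n ≥ 2 and every integer r ≥ 3, the r-ASC index of G satisfies θ_r(G) ≤ 2r − 1. -/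
namespace AscPaper

open SimpleGraph

section Construction

open Sum

variable {V : Type*} (G : SimpleGraph V) (a : V) (r : ℕ)

/-- The construction graph: `G` plus a path `w_1, …, w_{2r-1}` (indexed by `Fin (2r-1)`),
with every vertex of `V` other than `a` joined to both ends of the path. -/
def cG : SimpleGraph (V ⊕ Fin (2*r-1)) where
  Adj x y := match x, y with
    | inl u, inl v => G.Adj u v
    | inl u, inr j => u ≠ a ∧ ((j : ℕ) = 0 ∨ (j : ℕ) = 2*r-2)
    | inr j, inl u => u ≠ a ∧ ((j : ℕ) = 0 ∨ (j : ℕ) = 2*r-2)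
    | inr i, inr j => (i : ℕ) + 1 = (j : ℕ) ∨ (j : ℕ) + 1 = (i : ℕ)
  symm := by
    constructor
    rintro (u | i) (v | j) h
    · exact h.symm
    · exact h
    · exact h
    · exact h.symm
  loopless := by
    constructor
    rintro (u | i) h
    · exact G.irrefl h
    · omega

variable {G a r}

lemma cG_adj_inl_inl {u v : V} (h : G.Adj u v) : (cG G a r).Adj (inl u) (inl v) := h

lemma cG_adj_inl_inr {v : V} (hv : v ≠ a) {j : Fin (2*r-1)}
    (hj : (j : ℕ) = 0 ∨ (j : ℕ) = 2*r-2) : (cG G a r).Adj (inl v) (inr j) := ⟨hv, hj⟩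

lemma cG_adj_inr_inl {v : V} (hv : v ≠ a) {j : Fin (2*r-1)}
    (hj : (j : ℕ) = 0 ∨ (j : ℕ) = 2*r-2) : (cG G a r).Adj (inr j) (inl v) := ⟨hv, hj⟩

lemma cG_adj_inr_inr {i j : Fin (2*r-1)}
    (h : (i : ℕ) + 1 = (j : ℕ) ∨ (j : ℕ) + 1 = (i : ℕ)) :
    (cG G a r).Adj (inr i) (inr j) := h

/-- position of a vertex on the cycle of length 2r -/
def cpos : V ⊕ Fin (2*r-1) → ℕ
  | inl _ => 0
  | inr j => (j : ℕ) + 1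

/-- cyclic distance on `Z/(2r)` in terms of natural numbers -/
def cd (r s t : ℕ) : ℕ := min ((s-t)+(t-s)) (2*r - ((s-t)+(t-s)))

lemma cpos_le (x : V ⊕ Fin (2*r-1)) : cpos x ≤ 2*r-1 := by
  cases x with
  | inl u => simp [cpos]
  | inr j => have := j.2; simp [cpos]

/-- potentials give lower bounds on walk lengths -/
lemma pot_le_length {W : Type*} {H : SimpleGraph W} {f : W → ℕ}
    (hf : ∀ x y, H.Adj x y → f y ≤ f x + 1) {x y : W} (p : H.Walk x y) :
    f y ≤ f x + p.length := by
  induction p with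
  | nil => simp
  | @cons x z y h p ih =>
      have := hf x z h
      simp only [SimpleGraph.Walk.length_cons]
      omega

lemma edist_ge_pot {W : Type*} {H : SimpleGraph W} {f : W → ℕ}
    (hf : ∀ x y, H.Adj x y → f y ≤ f x + 1) {x y : W} (hx : f x = 0) :
    (f y : ℕ∞) ≤ H.edist x y := by
  rw [SimpleGraph.edist_eq_sInf]
  refine le_sInf ?_
  rintro _ ⟨p, rfl⟩
  have h := pot_le_length hf p
  show (f y : ℕ∞) ≤ (p.length : ℕ∞)
  exact_mod_cast (by omega : f y ≤ p.length)

/-- the master Lipschitz property of cyclic position -/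
lemma cd_lipschitz (hr : 3 ≤ r) (s : ℕ) (hs : s ≤ 2*r-1) :
    ∀ x y, (cG G a r).Adj x y → cd r s (cpos y) ≤ cd r s (cpos x) + 1 := by
  rintro (u | i) (v | j) h
  · simp [cpos]
  · obtain ⟨-, hj⟩ := h
    simp only [cpos, cd]
    omega
  · obtain ⟨-, hj⟩ := h
    simp only [cpos, cd]
    omega
  · have hi := i.2
    have hj := j.2
    have h' : (i : ℕ) + 1 = (j : ℕ) ∨ (j : ℕ) + 1 = (i : ℕ) := h
    simp only [cpos, cd]
    omega

lemma edist_ge_cd (hr : 3 ≤ r) (x y : V ⊕ Fin (2*r-1)) :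
    ((cd r (cpos x) (cpos y) : ℕ) : ℕ∞) ≤ (cG G a r).edist x y := by
  refine edist_ge_pot (f := fun z => cd r (cpos x) (cpos z))
    (cd_lipschitz hr _ (cpos_le x)) ?_
  simp only [cd]
  omega


lemma natCast_min (m n : ℕ) : ((min m n : ℕ) : ℕ∞) = min (m : ℕ∞) (n : ℕ∞) :=
  Nat.mono_cast.map_min

lemma estep {W : Type*} {H : SimpleGraph W} {x y z : W} (h : H.Adj y z) :
    H.edist x z ≤ H.edist x y + 1 := by
  calc H.edist x z ≤ H.edist x y + H.edist y z := SimpleGraph.edist_triangle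
    _ ≤ H.edist x y + 1 := by
        gcongr
        exact (SimpleGraph.edist_eq_one_iff_adj.mpr h).le

lemma cG_chain (hr : 3 ≤ r) : ∀ (m : ℕ) (i j : Fin (2*r-1)), (i : ℕ) + m = (j : ℕ) →
    (cG G a r).edist (inr i) (inr j) ≤ (m : ℕ∞) := by
  intro m
  induction m with
  | zero =>
      intro i j h
      have : i = j := Fin.ext (by omega)
      subst this
      simp [SimpleGraph.edist_self]
  | succ k ih =>
      intro i j h
      have hj := j.2
      have hk : (i : ℕ) + k < 2*r-1 := by omega
      have hadj : (cG G a r).Adj (inr ⟨(i : ℕ) + k, hk⟩) (inr j) :=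
        cG_adj_inr_inr (by simp; omega)
      calc (cG G a r).edist (inr i) (inr j)
          ≤ (cG G a r).edist (inr i) (inr ⟨(i : ℕ) + k, hk⟩) + 1 := estep hadj
        _ ≤ (k : ℕ∞) + 1 := by gcongr; exact ih i _ (by simp)
        _ = ((k+1 : ℕ) : ℕ∞) := by push_cast; ring

lemma cG_chain' (hr : 3 ≤ r) {i j : Fin (2*r-1)} {m : ℕ}
    (h : (i : ℕ) + m = (j : ℕ) ∨ (j : ℕ) + m = (i : ℕ)) :
    (cG G a r).edist (inr i) (inr j) ≤ (m : ℕ∞) := by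
  rcases h with h | h
  · exact cG_chain hr m i j h
  · rw [SimpleGraph.edist_comm]
    exact cG_chain hr m j i h

variable {b₀ : V}

lemma edist_inl_inr_le (hr : 3 ≤ r) {v : V} (hv : v ≠ a) (j : Fin (2*r-1)) :
    (cG G a r).edist (inl v) (inr j) ≤ ((min ((j : ℕ)+1) (2*r-1-(j : ℕ)) : ℕ) : ℕ∞) := by
  have hj := j.2
  have h0 : (cG G a r).Adj (inl v) (inr ⟨0, by omega⟩) := cG_adj_inl_inr hv (Or.inl rfl)
  have htop : (cG G a r).Adj (inl v) (inr ⟨2*r-2, by omega⟩) := cG_adj_inl_inr hv (Or.inr rfl)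
  rw [natCast_min]
  refine le_min ?_ ?_
  · calc (cG G a r).edist (inl v) (inr j)
        ≤ (cG G a r).edist (inl v) (inr ⟨0, by omega⟩)
          + (cG G a r).edist (inr ⟨0, by omega⟩) (inr j) := SimpleGraph.edist_triangle
      _ ≤ 1 + ((j : ℕ) : ℕ∞) := by
          gcongr
          · exact (SimpleGraph.edist_eq_one_iff_adj.mpr h0).le
          · exact cG_chain hr (j : ℕ) _ j (by simp)
      _ = (((j : ℕ) + 1 : ℕ) : ℕ∞) := by push_cast; ring
  · calc (cG G a r).edist (inl v) (inr j)
        ≤ (cG G a r).edist (inl v) (inr ⟨2*r-2, by omega⟩)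
          + (cG G a r).edist (inr ⟨2*r-2, by omega⟩) (inr j) := SimpleGraph.edist_triangle
      _ ≤ 1 + ((2*r-2-(j : ℕ) : ℕ) : ℕ∞) := by
          gcongr
          · exact (SimpleGraph.edist_eq_one_iff_adj.mpr htop).le
          · exact cG_chain' hr (Or.inr (by simp; omega))
      _ = ((2*r-1-(j : ℕ) : ℕ) : ℕ∞) := by
          rw [← Nat.cast_one, ← Nat.cast_add]
          congr 1
          omega

lemma edist_a_inr_le (hr : 3 ≤ r) (hab : G.Adj a b₀) (j : Fin (2*r-1)) :
    (cG G a r).edist (inl a) (inr j)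
      ≤ ((1 + min ((j : ℕ)+1) (2*r-1-(j : ℕ)) : ℕ) : ℕ∞) := by
  calc (cG G a r).edist (inl a) (inr j)
      ≤ (cG G a r).edist (inl a) (inl b₀) + (cG G a r).edist (inl b₀) (inr j) :=
        SimpleGraph.edist_triangle
    _ ≤ 1 + ((min ((j : ℕ)+1) (2*r-1-(j : ℕ)) : ℕ) : ℕ∞) := by
        gcongr
        · exact (SimpleGraph.edist_eq_one_iff_adj.mpr (cG_adj_inl_inl hab)).le
        · exact edist_inl_inr_le hr hab.ne' j
    _ = ((1 + min ((j : ℕ)+1) (2*r-1-(j : ℕ)) : ℕ) : ℕ∞) := by push_cast; ring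

lemma edist_b_inl_le (hr : 3 ≤ r) {w v : V} (hw : w ≠ a) (hv : v ≠ a) :
    (cG G a r).edist (inl w) (inl v) ≤ 2 := by
  calc (cG G a r).edist (inl w) (inl v)
      ≤ (cG G a r).edist (inl w) (inr ⟨0, by omega⟩)
        + (cG G a r).edist (inr ⟨0, by omega⟩) (inl v) := SimpleGraph.edist_triangle
    _ ≤ 1 + 1 := by
        gcongr
        · exact (SimpleGraph.edist_eq_one_iff_adj.mpr (cG_adj_inl_inr hw (Or.inl rfl))).le
        · exact (SimpleGraph.edist_eq_one_iff_adj.mpr (cG_adj_inr_inl hv (Or.inl rfl))).le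
    _ = 2 := by norm_num

lemma edist_a_inl_le (hr : 3 ≤ r) (hab : G.Adj a b₀) (v : V) :
    (cG G a r).edist (inl a) (inl v) ≤ 3 := by
  rcases eq_or_ne v a with rfl | hv
  · simp [SimpleGraph.edist_self]
  · calc (cG G a r).edist (inl a) (inl v)
        ≤ (cG G a r).edist (inl a) (inl b₀) + (cG G a r).edist (inl b₀) (inl v) :=
          SimpleGraph.edist_triangle
      _ ≤ 1 + 2 := by
          gcongr
          · exact (SimpleGraph.edist_eq_one_iff_adj.mpr (cG_adj_inl_inl hab)).le
          · exact edist_b_inl_le hr hab.ne' hv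
      _ = 3 := by norm_num

lemma edist_inl_inl_le (hr : 3 ≤ r) (hab : G.Adj a b₀) (u v : V) :
    (cG G a r).edist (inl u) (inl v) ≤ ((3 : ℕ) : ℕ∞) := by
  have h3 : ((3:ℕ) : ℕ∞) = 3 := by norm_num
  rw [h3]
  rcases eq_or_ne u a with rfl | hu
  · exact edist_a_inl_le hr hab v
  · rcases eq_or_ne v a with rfl | hv
    · rw [SimpleGraph.edist_comm]
      exact edist_a_inl_le hr hab u
    · exact (edist_b_inl_le hr hu hv).trans (by norm_num)

lemma edist_inr_inr_le (hr : 3 ≤ r) (hab : G.Adj a b₀) (i j : Fin (2*r-1))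
    (hij : (i : ℕ) ≤ (j : ℕ)) :
    (cG G a r).edist (inr i) (inr j)
      ≤ ((min ((j : ℕ)-(i : ℕ)) (2*r - ((j : ℕ)-(i : ℕ))) : ℕ) : ℕ∞) := by
  have hi := i.2
  have hj := j.2
  rw [natCast_min]
  refine le_min ?_ ?_
  · exact cG_chain' hr (Or.inl (by omega))
  · -- the route around: i → w0 → b₀ → wtop → j
    calc (cG G a r).edist (inr i) (inr j)
        ≤ (cG G a r).edist (inr i) (inr ⟨2*r-2, by omega⟩)
          + (cG G a r).edist (inr ⟨2*r-2, by omega⟩) (inr j) := SimpleGraph.edist_triangle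
      _ ≤ ((cG G a r).edist (inr i) (inl b₀) + 1) + ((2*r-2-(j : ℕ) : ℕ) : ℕ∞) := by
          gcongr
          · exact estep (cG_adj_inl_inr (j := ⟨2*r-2, by omega⟩) hab.ne' (Or.inr rfl))
          · exact cG_chain' hr (Or.inr (by simp; omega))
      _ ≤ (((cG G a r).edist (inr i) (inr ⟨0, by omega⟩) + 1) + 1)
            + ((2*r-2-(j : ℕ) : ℕ) : ℕ∞) := by
          gcongr
          exact estep (cG_adj_inr_inl (j := ⟨0, by omega⟩) hab.ne' (Or.inl rfl))
      _ ≤ ((((i : ℕ) : ℕ∞) + 1) + 1) + ((2*r-2-(j : ℕ) : ℕ) : ℕ∞) := by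
          gcongr
          exact cG_chain' hr (Or.inr (by simp))
      _ = (((i : ℕ) + 1 + 1 + (2*r-2-(j : ℕ)) : ℕ) : ℕ∞) := by push_cast; ring
      _ ≤ ((2*r - ((j : ℕ)-(i : ℕ)) : ℕ) : ℕ∞) := by
          rw [Nat.cast_le]
          omega

lemma edist_inr_inr_le' (hr : 3 ≤ r) (hab : G.Adj a b₀) (i j : Fin (2*r-1)) :
    (cG G a r).edist (inr i) (inr j)
      ≤ ((cd r ((i : ℕ)+1) ((j : ℕ)+1) : ℕ) : ℕ∞) := by
  rcases le_total (i : ℕ) (j : ℕ) with h | h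
  · refine (edist_inr_inr_le hr hab i j h).trans ?_
    rw [Nat.cast_le]
    simp only [cd]
    omega
  · rw [SimpleGraph.edist_comm]
    refine (edist_inr_inr_le hr hab j i h).trans ?_
    rw [Nat.cast_le]
    simp only [cd]
    omega

open scoped Classical in
/-- potential showing vertex `a` is at distance `≥ r+1` from the midpoint vertex -/
noncomputable def f2 (a : V) (r : ℕ) : V ⊕ Fin (2*r-1) → ℕ
  | inl u => if u = a then r+1 else r
  | inr j => cd r r ((j : ℕ)+1)

lemma f2_lipschitz (hr : 3 ≤ r) :
    ∀ x y, (cG G a r).Adj x y → f2 a r y ≤ f2 a r x + 1 := by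
  rintro (u | i) (v | j) h
  · simp only [f2]
    split_ifs <;> omega
  · obtain ⟨hu, hj⟩ := h
    simp only [f2, cd, if_neg hu]
    omega
  · obtain ⟨hv, hj⟩ := h
    simp only [f2, cd, if_neg hv]
    omega
  · have h' : (i : ℕ) + 1 = (j : ℕ) ∨ (j : ℕ) + 1 = (i : ℕ) := h
    have hi := i.2
    have hj := j.2
    simp only [f2, cd]
    omega

lemma edist_m_a (hr : 3 ≤ r) :
    (((r+1 : ℕ)) : ℕ∞) ≤ (cG G a r).edist (inr ⟨r-1, by omega⟩) (inl a) := by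
  have h0 : f2 a r (inr ⟨r-1, by omega⟩) = 0 := by
    simp only [f2, cd]
    omega
  have := edist_ge_pot (H := cG G a r) (f2_lipschitz hr) h0 (y := inl a)
  simpa [f2] using this

lemma ecc_le_r (hr : 3 ≤ r) (hab : G.Adj a b₀) {x : V ⊕ Fin (2*r-1)}
    (hx1 : x ≠ inl a) (hx2 : cpos x ≠ r) : ecc (cG G a r) x ≤ (r : ℕ∞) := by
  refine iSup_le ?_
  intro y
  cases x with
  | inl v =>
      have hv : v ≠ a := fun h => hx1 (by rw [h])
      cases y with
      | inl u => exact (edist_inl_inl_le hr hab v u).trans (Nat.cast_le.mpr (by omega))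
      | inr j =>
          have hj := j.2
          exact (edist_inl_inr_le hr hv j).trans (Nat.cast_le.mpr (by omega))
  | inr i =>
      have hi := i.2
      have hi2 : (i : ℕ) + 1 ≠ r := hx2
      cases y with
      | inl u =>
          rcases eq_or_ne u a with rfl | hu
          · rw [SimpleGraph.edist_comm]
            exact (edist_a_inr_le hr hab i).trans (Nat.cast_le.mpr (by omega))
          · rw [SimpleGraph.edist_comm]
            exact (edist_inl_inr_le hr hu i).trans (Nat.cast_le.mpr (by omega))
      | inr j =>
          have hj := j.2
          refine (edist_inr_inr_le' hr hab i j).trans (Nat.cast_le.mpr ?_)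
          simp only [cd]
          omega

lemma exists_far {V : Type*} (a' : V) (hr : 3 ≤ r) (x : V ⊕ Fin (2*r-1)) :
    ∃ y : V ⊕ Fin (2*r-1), r ≤ cd r (cpos x) (cpos y) := by
  cases x with
  | inl u =>
      refine ⟨inr ⟨r-1, by omega⟩, ?_⟩
      simp only [cpos, cd]
      omega
  | inr j =>
      have hj := j.2
      rcases lt_trichotomy ((j : ℕ) + 1) r with h | h | h
      · refine ⟨inr ⟨(j : ℕ) + r, by omega⟩, ?_⟩
        simp only [cpos, cd]
        omega
      · refine ⟨inl a', ?_⟩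
        simp only [cpos, cd]
        omega
      · refine ⟨inr ⟨(j : ℕ) - r, by omega⟩, ?_⟩
        simp only [cpos, cd]
        omega

lemma r_le_ecc (hr : 3 ≤ r) (x : V ⊕ Fin (2*r-1)) :
    (r : ℕ∞) ≤ ecc (cG G a r) x := by
  obtain ⟨y, hy⟩ := exists_far a hr x
  calc (r : ℕ∞) ≤ ((cd r (cpos x) (cpos y) : ℕ) : ℕ∞) := Nat.cast_le.mpr hy
    _ ≤ (cG G a r).edist x y := edist_ge_cd hr x y
    _ ≤ ecc (cG G a r) x := le_iSup _ y

lemma rad_eq (hr : 3 ≤ r) (hab : G.Adj a b₀) : graphRadius (cG G a r) = (r : ℕ∞) := by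
  refine le_antisymm ?_ (le_iInf (r_le_ecc hr))
  refine iInf_le_of_le (inr ⟨0, by omega⟩) ?_
  refine ecc_le_r hr hab (fun h => nomatch h) ?_
  simp only [cpos]
  omega

lemma ecc_central (hr : 3 ≤ r) (hab : G.Adj a b₀) {x : V ⊕ Fin (2*r-1)}
    (hx1 : x ≠ inl a) (hx2 : cpos x ≠ r) : ecc (cG G a r) x = (r : ℕ∞) :=
  le_antisymm (ecc_le_r hr hab hx1 hx2) (r_le_ecc hr x)

lemma ecc_a_ge (hr : 3 ≤ r) :
    (((r+1 : ℕ)) : ℕ∞) ≤ ecc (cG G a r) (inl a) := by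
  calc (((r+1 : ℕ)) : ℕ∞) ≤ (cG G a r).edist (inl a) (inr ⟨r-1, by omega⟩) := by
        rw [SimpleGraph.edist_comm]
        exact edist_m_a hr
    _ ≤ ecc (cG G a r) (inl a) := le_iSup _ _

lemma ecc_m_ge (hr : 3 ≤ r) :
    (((r+1 : ℕ)) : ℕ∞) ≤ ecc (cG G a r) (inr ⟨r-1, by omega⟩) :=
  le_trans (edist_m_a hr) (le_iSup _ (inl a))

lemma set_eq (hr : 3 ≤ r) (hab : G.Adj a b₀) :
    {u | ecc (cG G a r) u ≠ graphRadius (cG G a r)}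
      = {inl a, inr ⟨r-1, by omega⟩} := by
  rw [rad_eq hr hab]
  ext x
  simp only [Set.mem_setOf_eq, Set.mem_insert_iff, Set.mem_singleton_iff]
  constructor
  · intro hne
    by_contra hc
    push_neg at hc
    obtain ⟨h1, h2⟩ := hc
    refine hne (ecc_central hr hab h1 ?_)
    cases x with
    | inl u => simp only [cpos]; omega
    | inr j =>
        simp only [cpos]
        intro hj
        exact h2 (congrArg inr (Fin.ext (show (j : ℕ) = r - 1 by omega)))
  · rintro (rfl | rfl) <;> intro h
    · have := ecc_a_ge (G := G) (a := a) hr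
      rw [h] at this
      have := Nat.cast_le.mp this
      omega
    · have := ecc_m_ge (G := G) (a := a) hr
      rw [h] at this
      have := Nat.cast_le.mp this
      omega

lemma cG_connected (hr : 3 ≤ r) (hab : G.Adj a b₀) : (cG G a r).Connected := by
  rw [SimpleGraph.connected_iff]
  refine ⟨?_, ⟨inl a⟩⟩
  have key : ∀ x, (cG G a r).Reachable x (inl a) := by
    intro x
    apply SimpleGraph.reachable_of_edist_ne_top
    cases x with
    | inl u =>
        exact ne_top_of_le_ne_top (ENat.coe_ne_top 3) (edist_inl_inl_le hr hab u a)
    | inr j =>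
        rw [SimpleGraph.edist_comm]
        exact ne_top_of_le_ne_top (ENat.coe_ne_top _) (edist_a_inr_le hr hab j)
  intro x y
  exact (key x).trans (key y).symm

lemma cG_isASC (hr : 3 ≤ r) (hab : G.Adj a b₀) : IsASC r (cG G a r) := by
  refine ⟨cG_connected hr hab, rad_eq hr hab, ?_⟩
  rw [set_eq hr hab]
  exact Set.ncard_pair (fun h => nomatch h)

lemma exists_adj_of_connected [Fintype V] (hconn : G.Connected)
    (h2 : 2 ≤ Fintype.card V) : ∃ a b : V, G.Adj a b := by
  obtain ⟨x⟩ := Fintype.card_pos_iff.mp (by omega : 0 < Fintype.card V)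
  obtain ⟨y, hy⟩ := Fintype.exists_ne_of_one_lt_card (by omega) x
  obtain ⟨p⟩ := hconn.preconnected y x
  cases p with
  | nil => exact absurd rfl hy
  | cons h q => exact ⟨_, _, h⟩

end Construction

/-- For every connected finite simple graph `G` of order `n ≥ 2` and every integer
`r ≥ 3`, the `r`-ASC index of `G` satisfies `θ_r(G) ≤ 2r − 1`. -/
theorem theta_le_two_mul_sub_one {V : Type*} [Fintype V]
    (G : SimpleGraph V) (hconn : G.Connected) (hcard : 2 ≤ Fintype.card V)
    (r : ℕ) (hr : 3 ≤ r) :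
    theta r G ≤ 2 * r - 1 := by
  obtain ⟨a, b₀, hab⟩ := exists_adj_of_connected hconn hcard
  exact Nat.sInf_le ⟨cG G a r, cG_isASC hr hab, fun u v => Iff.rfl⟩

end AscPaper
end

section
/- For every integer n ≥ 2, the 3-ASC index of the complete graph K_n equals 5, i.e., θ_3(K_n) = 5. -/
namespace AscPaper

open SimpleGraph

section Helpers

variable {V : Type*} {G : SimpleGraph V}

lemma le_edist_of_forall_walk {u v : V} {m : ℕ∞} (h : ∀ p : G.Walk u v, m ≤ p.length) :
    m ≤ G.edist u v := by
  rw [SimpleGraph.edist_eq_sInf]; exact le_sInf (by rintro _ ⟨p, rfl⟩; exact h p)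

lemma adj_edist_le_one {u v : V} (h : G.Adj u v) : G.edist u v ≤ 1 := by
  simpa using SimpleGraph.edist_le h.toWalk

lemma one_le_edist {u v : V} (h : u ≠ v) : 1 ≤ G.edist u v :=
  Order.one_le_iff_pos.mpr (SimpleGraph.edist_pos_of_ne h)

lemma succ_le_edist {u v : V} {m : ℕ∞} (hne : u ≠ v)
    (h : ∀ x, G.Adj u x → m ≤ G.edist x v) : m + 1 ≤ G.edist u v := by
  apply le_edist_of_forall_walk
  intro p
  cases p with
  | nil => exact absurd rfl hne
  | @cons _ x _ hadj q =>
      calc m + 1 ≤ G.edist x v + 1 := add_le_add_left (h x hadj) 1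
        _ ≤ (q.length : ℕ∞) + 1 := add_le_add_left (SimpleGraph.edist_le q) 1
        _ = ((q.length + 1 : ℕ) : ℕ∞) := by push_cast; ring
        _ = _ := by rw [SimpleGraph.Walk.length_cons]

lemma two_le_edist {u v : V} (hne : u ≠ v) (hadj : ¬ G.Adj u v) : 2 ≤ G.edist u v := by
  have := succ_le_edist (G := G) (m := 1) hne (fun x hx => one_le_edist (by rintro rfl; exact hadj hx))
  rw [← one_add_one_eq_two]; exact this

lemma gateway_aux {S : Set V} {g : V}
    (hS : ∀ x y, G.Adj x y → y ∈ S → x ∈ S ∨ x = g) :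
    ∀ {u s : V} (p : G.Walk u s), s ∈ S → u ∉ S → G.edist u g + G.edist g s ≤ p.length := by
  intro u s p
  induction p with
  | nil => intro hs hu; exact absurd hs hu
  | @cons u x s hadj q ih =>
    intro hs hu
    by_cases hx : x ∈ S
    · rcases hS u x hadj hx with h' | rfl
      · exact absurd h' hu
      · rw [SimpleGraph.edist_self, zero_add]
        exact SimpleGraph.edist_le _
    · have h1 : G.edist u g ≤ 1 + G.edist x g :=
        calc G.edist u g ≤ G.edist u x + G.edist x g := SimpleGraph.edist_triangle
          _ ≤ 1 + G.edist x g := add_le_add_left (adj_edist_le_one hadj) _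
      calc G.edist u g + G.edist g s ≤ (1 + G.edist x g) + G.edist g s :=
            add_le_add_left h1 _
        _ = 1 + (G.edist x g + G.edist g s) := by ring
        _ ≤ 1 + (q.length : ℕ∞) := add_le_add_right (ih hs hx) 1
        _ = ((q.length + 1 : ℕ) : ℕ∞) := by push_cast; ring
        _ = _ := by rw [SimpleGraph.Walk.length_cons]

lemma gateway {S : Set V} {g s u : V} (hs : s ∈ S) (hu : u ∉ S)
    (hS : ∀ x y, G.Adj x y → y ∈ S → x ∈ S ∨ x = g) :
    G.edist u g + G.edist g s ≤ G.edist u s :=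
  le_edist_of_forall_walk (fun p => gateway_aux hS p hs hu)

lemma closed_walk_aux {S : Set V} (hS : ∀ x y, G.Adj x y → y ∈ S → x ∈ S) :
    ∀ {u v : V} (_ : G.Walk u v), u ∉ S → v ∈ S → False := by
  intro u v p
  induction p with
  | nil => intro hu hv; exact hu hv
  | @cons u x v hadj q ih =>
    intro hu hv
    by_cases hx : x ∈ S
    · exact hu (hS u x hadj hx)
    · exact ih hx hv

lemma closed_not_reachable {S : Set V} (hS : ∀ x y, G.Adj x y → y ∈ S → x ∈ S)
    {u v : V} (hu : u ∉ S) (hv : v ∈ S) : ¬ G.Reachable u v := by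
  intro h
  obtain ⟨p⟩ := h
  exact closed_walk_aux hS p hu hv

lemma enat_three_of_two_lt {x : ℕ∞} (h : 2 < x) : 3 ≤ x := by
  have : (2 : ℕ∞) + 1 ≤ x := (ENat.add_one_le_iff (by simp)).mpr h
  calc (3 : ℕ∞) = 2 + 1 := by norm_num
    _ ≤ x := this

lemma enat_le_two_of_lt_three {x : ℕ∞} (h : x < 3) : x ≤ 2 := by
  by_contra hc
  exact absurd (enat_three_of_two_lt (not_le.mp hc)) (not_le.mpr h)

end Helpers

section EccHelpers
variable {V : Type*} {G : SimpleGraph V}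

lemma ecc_le {u : V} {m : ℕ∞} (h : ∀ v, G.edist u v ≤ m) : ecc G u ≤ m := iSup_le h

lemma edist_le_ecc {u v : V} : G.edist u v ≤ ecc G u := le_iSup _ v

lemma le_ecc_of_edist {u v : V} {m : ℕ∞} (h : m ≤ G.edist u v) : m ≤ ecc G u :=
  h.trans edist_le_ecc

lemma radius_le_ecc (u : V) : graphRadius G ≤ ecc G u := iInf_le _ u

lemma le_radius {m : ℕ∞} (h : ∀ u, m ≤ ecc G u) : m ≤ graphRadius G := le_iInf h

lemma exists_edist_ge_three {u : V} (h : 3 ≤ ecc G u) : ∃ v, 3 ≤ G.edist u v := by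
  by_contra hc
  push_neg at hc
  have h2 : ecc G u ≤ 2 := ecc_le (fun v => enat_le_two_of_lt_three (hc v))
  have h32 : (3:ℕ∞) ≤ 2 := h.trans h2
  norm_num at h32

lemma edist_le_two_chain {u x v : V} (h1 : G.Adj u x) (h2 : G.Adj x v) :
    G.edist u v ≤ 2 :=
  calc G.edist u v ≤ G.edist u x + G.edist x v := SimpleGraph.edist_triangle
    _ ≤ 1 + 1 := add_le_add (adj_edist_le_one h1) (adj_edist_le_one h2)
    _ = 2 := by norm_num

lemma edist_le_three_chain {u x y v : V} (h1 : G.Adj u x) (h2 : G.Adj x y) (h3 : G.Adj y v) :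
    G.edist u v ≤ 3 :=
  calc G.edist u v ≤ G.edist u x + G.edist x v := SimpleGraph.edist_triangle
    _ ≤ 1 + 2 := add_le_add (adj_edist_le_one h1) (edist_le_two_chain h2 h3)
    _ = 3 := by norm_num

lemma edist_le_four_chain {u x y z v : V} (h1 : G.Adj u x) (h2 : G.Adj x y) (h3 : G.Adj y z)
    (h4 : G.Adj z v) : G.edist u v ≤ 4 :=
  calc G.edist u v ≤ G.edist u x + G.edist x v := SimpleGraph.edist_triangle
    _ ≤ 1 + 3 := add_le_add (adj_edist_le_one h1) (edist_le_three_chain h2 h3 h4)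
    _ = 4 := by norm_num

lemma three_noncentral_false [Finite V] {x y z : V} (hrad : graphRadius G = 3)
    (hc : {u : V | ecc G u ≠ graphRadius G}.ncard = 2)
    (hxy : x ≠ y) (hxz : x ≠ z) (hyz : y ≠ z)
    (hx : 4 ≤ ecc G x) (hy : 4 ≤ ecc G y) (hz : 4 ≤ ecc G z) : False := by
  have hmem : ∀ w : V, 4 ≤ ecc G w → w ∈ {u : V | ecc G u ≠ graphRadius G} := by
    intro w hw
    simp only [Set.mem_setOf_eq, hrad]
    intro he
    rw [he] at hw
    norm_num at hw
  have hsub : ({x, y, z} : Set V) ⊆ {u | ecc G u ≠ graphRadius G} := by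
    rintro w (rfl | rfl | rfl)
    · exact hmem _ hx
    · exact hmem _ hy
    · exact hmem _ hz
  have h3 : ({x, y, z} : Set V).ncard = 3 := by
    rw [Set.ncard_insert_of_notMem (by simp [hxy, hxz]), Set.ncard_pair hyz]
  have hle := Set.ncard_le_ncard hsub (Set.toFinite _)
  omega

end EccHelpers

section Upper

/-- adjacency among the five added vertices: edges {0,2},{1,3},{2,3},{2,4} -/
def addAdj (a b : Fin 5) : Prop :=
  (a = 0 ∧ b = 2) ∨ (a = 2 ∧ b = 0) ∨ (a = 1 ∧ b = 3) ∨ (a = 3 ∧ b = 1) ∨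
  (a = 2 ∧ b = 3) ∨ (a = 3 ∧ b = 2) ∨ (a = 2 ∧ b = 4) ∨ (a = 4 ∧ b = 2)

instance : DecidablePred (fun p : Fin 5 × Fin 5 => addAdj p.1 p.2) := fun p => by
  unfold addAdj; infer_instance

instance addAdj.dec (a b : Fin 5) : Decidable (addAdj a b) := by
  unfold addAdj; infer_instance

/-- cross adjacency: added vertex 0 is joined to every `u` with `u.val ≠ 0`,
added vertex 1 is joined to the `u` with `u.val = 0`. -/
def crossAdj {n : ℕ} (u : Fin n) (a : Fin 5) : Prop :=
  (a = 0 ∧ (u : ℕ) ≠ 0) ∨ (a = 1 ∧ (u : ℕ) = 0)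

instance crossAdj.dec {n : ℕ} (u : Fin n) (a : Fin 5) : Decidable (crossAdj u a) := by
  unfold crossAdj; infer_instance

def Hup (n : ℕ) : SimpleGraph (Fin n ⊕ Fin 5) where
  Adj x y := match x, y with
    | .inl u, .inl v => u ≠ v
    | .inl u, .inr a => crossAdj u a
    | .inr a, .inl u => crossAdj u a
    | .inr a, .inr b => addAdj a b
  symm := by
    constructor
    rintro (u | a) (v | b) h
    · exact Ne.symm h
    · exact h
    · exact h
    · exact (by decide : ∀ x y : Fin 5, addAdj x y → addAdj y x) a b h
  loopless := by
    constructor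
    rintro (u | a) h
    · exact h rfl
    · exact (by decide : ∀ x : Fin 5, ¬ addAdj x x) a h

lemma hup_ll {n : ℕ} {u v : Fin n} : (Hup n).Adj (.inl u) (.inl v) ↔ u ≠ v := Iff.rfl
lemma hup_lr {n : ℕ} {u : Fin n} {a : Fin 5} : (Hup n).Adj (.inl u) (.inr a) ↔ crossAdj u a := Iff.rfl
lemma hup_rl {n : ℕ} {u : Fin n} {a : Fin 5} : (Hup n).Adj (.inr a) (.inl u) ↔ crossAdj u a := Iff.rfl
lemma hup_rr {n : ℕ} {a b : Fin 5} : (Hup n).Adj (.inr a) (.inr b) ↔ addAdj a b := Iff.rfl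

lemma upper_exists (n : ℕ) (hn : 2 ≤ n) :
    ∃ H : SimpleGraph (Fin n ⊕ Fin 5), IsASC 3 H ∧
      ∀ u v : Fin n, H.Adj (Sum.inl u) (Sum.inl v) ↔ (⊤ : SimpleGraph (Fin n)).Adj u v := by
  classical
  refine ⟨Hup n, ?_, ?_⟩
  swap
  · intro u v
    simp [hup_ll, top_adj]
  set H := Hup n with hHdef
  set z : Fin n := ⟨0, by omega⟩ with hzdef
  set o : Fin n := ⟨1, by omega⟩ with hodef
  have hzo : z ≠ o := by simp [hzdef, hodef, Fin.ext_iff]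
  have hvz : ∀ u : Fin n, (u : ℕ) = 0 ↔ u = z := by
    intro u; simp [hzdef, Fin.ext_iff]
  -- adjacency facts
  have aK : ∀ u v : Fin n, u ≠ v → H.Adj (.inl u) (.inl v) := fun u v h => hup_ll.mpr h
  have a0 : ∀ u : Fin n, u ≠ z → H.Adj (.inl u) (.inr 0) := by
    intro u h
    exact hup_lr.mpr (Or.inl ⟨rfl, fun hc => h ((hvz u).mp hc)⟩)
  have a1 : H.Adj (.inl z) (.inr 1) := hup_lr.mpr (Or.inr ⟨rfl, rfl⟩)
  have a02 : H.Adj (.inr 0) (.inr 2) := hup_rr.mpr (by decide)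
  have a13 : H.Adj (.inr 1) (.inr 3) := hup_rr.mpr (by decide)
  have a23 : H.Adj (.inr 2) (.inr 3) := hup_rr.mpr (by decide)
  have a24 : H.Adj (.inr 2) (.inr 4) := hup_rr.mpr (by decide)
  -- neighbor characterizations
  have nb4 : ∀ x, H.Adj (.inr 4) x → x = .inr 2 := by
    rintro (u | b) h
    · rcases hup_rl.mp h with ⟨h4, -⟩ | ⟨h4, -⟩ <;> exact absurd h4 (by decide)
    · have hb := (by decide : ∀ b : Fin 5, addAdj 4 b → b = 2) b (hup_rr.mp h)
      rw [hb]
  have nb2 : ∀ x, H.Adj (.inr 2) x → x = .inr 0 ∨ x = .inr 3 ∨ x = .inr 4 := by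
    rintro (u | b) h
    · rcases hup_rl.mp h with ⟨h4, -⟩ | ⟨h4, -⟩ <;> exact absurd h4 (by decide)
    · rcases (by decide : ∀ b : Fin 5, addAdj 2 b → b = 0 ∨ b = 3 ∨ b = 4) b (hup_rr.mp h)
        with hb | hb | hb <;> rw [hb] <;> tauto
  have nb1 : ∀ x, H.Adj (.inr 1) x → x = .inl z ∨ x = .inr 3 := by
    rintro (u | b) h
    · rcases hup_rl.mp h with ⟨h4, -⟩ | ⟨-, h4⟩
      · exact absurd h4 (by decide)
      · left; rw [(hvz u).mp h4]
    · have hb := (by decide : ∀ b : Fin 5, addAdj 1 b → b = 3) b (hup_rr.mp h)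
      rw [hb]; tauto
  have nb3 : ∀ x, H.Adj (.inr 3) x → x = .inr 1 ∨ x = .inr 2 := by
    rintro (u | b) h
    · rcases hup_rl.mp h with ⟨h4, -⟩ | ⟨h4, -⟩ <;> exact absurd h4 (by decide)
    · rcases (by decide : ∀ b : Fin 5, addAdj 3 b → b = 1 ∨ b = 2) b (hup_rr.mp h)
        with hb | hb <;> rw [hb] <;> tauto
  -- simple non-adjacencies
  have nadj_l2 : ∀ u : Fin n, ¬ H.Adj (.inl u) (.inr 2) := by
    intro u h
    rcases hup_lr.mp h with ⟨h4, -⟩ | ⟨h4, -⟩ <;> exact absurd h4 (by decide)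
  have nadj_l3 : ∀ u : Fin n, ¬ H.Adj (.inl u) (.inr 3) := by
    intro u h
    rcases hup_lr.mp h with ⟨h4, -⟩ | ⟨h4, -⟩ <;> exact absurd h4 (by decide)
  have nadj_l4 : ∀ u : Fin n, ¬ H.Adj (.inl u) (.inr 4) := by
    intro u h
    rcases hup_lr.mp h with ⟨h4, -⟩ | ⟨h4, -⟩ <;> exact absurd h4 (by decide)
  have nadj_z0 : ¬ H.Adj (.inl z) (.inr 0) := by
    intro h
    rcases hup_lr.mp h with ⟨-, h4⟩ | ⟨h4, -⟩
    · exact h4 rfl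
    · exact absurd h4 (by decide)
  have nadj_u1 : ∀ u : Fin n, u ≠ z → ¬ H.Adj (.inl u) (.inr 1) := by
    intro u hu h
    rcases hup_lr.mp h with ⟨h4, -⟩ | ⟨-, h4⟩
    · exact absurd h4 (by decide)
    · exact hu ((hvz u).mp h4)
  have nadj_30 : ¬ H.Adj (.inr 3) (.inr 0) := fun h =>
    (by decide : ¬ addAdj 3 0) (hup_rr.mp h)
  -- upper distance bounds
  have U1 : ∀ u v : Fin n, H.edist (.inl u) (.inl v) ≤ 1 := by
    intro u v
    rcases eq_or_ne u v with rfl | h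
    · simp [SimpleGraph.edist_self]
    · exact adj_edist_le_one (aK u v h)
  have U2 : ∀ u : Fin n, H.edist (.inl u) (.inr 0) ≤ 2 := by
    intro u
    rcases eq_or_ne u z with rfl | h
    · exact edist_le_two_chain (aK z o hzo) (a0 o (Ne.symm hzo))
    · exact (adj_edist_le_one (a0 u h)).trans (by norm_num)
  have U3 : ∀ u : Fin n, H.edist (.inl u) (.inr 1) ≤ 2 := by
    intro u
    rcases eq_or_ne u z with rfl | h
    · exact (adj_edist_le_one a1).trans (by norm_num)
    · exact edist_le_two_chain (aK u z h) a1
  have U4 : ∀ u : Fin n, H.edist (.inl u) (.inr 2) ≤ 3 := by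
    intro u
    rcases eq_or_ne u z with rfl | h
    · exact edist_le_three_chain (aK z o hzo) (a0 o (Ne.symm hzo)) a02
    · exact (edist_le_two_chain (a0 u h) a02).trans (by norm_num)
  have U5 : ∀ u : Fin n, H.edist (.inl u) (.inr 3) ≤ 3 := by
    intro u
    rcases eq_or_ne u z with rfl | h
    · exact (edist_le_two_chain a1 a13).trans (by norm_num)
    · exact edist_le_three_chain (a0 u h) a02 a23
  have U6 : ∀ u : Fin n, H.edist (.inl u) (.inr 4) ≤ 4 := by
    intro u
    rcases eq_or_ne u z with rfl | h
    · exact edist_le_four_chain (aK z o hzo) (a0 o (Ne.symm hzo)) a02 a24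
    · exact (edist_le_three_chain (a0 u h) a02 a24).trans (by norm_num)
  have U6' : ∀ u : Fin n, u ≠ z → H.edist (.inl u) (.inr 4) ≤ 3 := by
    intro u h
    exact edist_le_three_chain (a0 u h) a02 a24
  have U01 : H.edist (.inr 0) (.inr 1) ≤ 3 :=
    edist_le_three_chain (SimpleGraph.Adj.symm (a0 o (Ne.symm hzo))) (aK o z (Ne.symm hzo)) a1
  have U03 : H.edist (.inr 0) (.inr 3) ≤ 2 := edist_le_two_chain a02 a23
  have U04 : H.edist (.inr 0) (.inr 4) ≤ 2 := edist_le_two_chain a02 a24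
  have U12 : H.edist (.inr 1) (.inr 2) ≤ 2 := edist_le_two_chain a13 (SimpleGraph.Adj.symm a23)
  have U14 : H.edist (.inr 1) (.inr 4) ≤ 3 := edist_le_three_chain a13 (SimpleGraph.Adj.symm a23) a24
  have U34 : H.edist (.inr 3) (.inr 4) ≤ 2 := edist_le_two_chain (SimpleGraph.Adj.symm a23) a24
  -- lower bounds
  have two_ne : ∀ (u : Fin n) (b : Fin 5), (Sum.inr b : Fin n ⊕ Fin 5) ≠ .inl u := by
    intro u b h; exact nomatch h
  have L1 : ∀ u : Fin n, 3 ≤ H.edist (.inr 4) (.inl u) := by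
    intro u
    have h2 : ∀ x, H.Adj (.inr 4) x → 2 ≤ H.edist x (.inl u) := by
      intro x hx
      rw [nb4 x hx]
      exact two_le_edist (two_ne u 2) (fun h => nadj_l2 u (SimpleGraph.Adj.symm h))
    have := succ_le_edist (two_ne u 4) h2
    exact le_trans (by norm_num) this
  have L2 : 3 ≤ H.edist (.inr 2) (.inl z) := by
    have h2 : ∀ x, H.Adj (.inr 2) x → 2 ≤ H.edist x (.inl z) := by
      intro x hx
      rcases nb2 x hx with rfl | rfl | rfl
      · exact two_le_edist (two_ne z 0) (fun h => nadj_z0 (SimpleGraph.Adj.symm h))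
      · exact two_le_edist (two_ne z 3) (fun h => nadj_l3 z (SimpleGraph.Adj.symm h))
      · exact two_le_edist (two_ne z 4) (fun h => nadj_l4 z (SimpleGraph.Adj.symm h))
    have := succ_le_edist (two_ne z 2) h2
    exact le_trans (by norm_num) this
  have L3 : 4 ≤ H.edist (.inr 4) (.inl z) := by
    have h3 : ∀ x, H.Adj (.inr 4) x → 3 ≤ H.edist x (.inl z) := by
      intro x hx; rw [nb4 x hx]; exact L2
    have := succ_le_edist (two_ne z 4) h3
    exact le_trans (by norm_num) this
  have L4 : 3 ≤ H.edist (.inr 1) (.inr 0) := by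
    have h2 : ∀ x, H.Adj (.inr 1) x → 2 ≤ H.edist x (.inr 0) := by
      intro x hx
      rcases nb1 x hx with rfl | rfl
      · exact two_le_edist (fun h => nomatch h) nadj_z0
      · exact two_le_edist (by simp) nadj_30
    have := succ_le_edist (by simp) h2
    exact le_trans (by norm_num) this
  have L5 : 3 ≤ H.edist (.inr 3) (.inl o) := by
    have h2 : ∀ x, H.Adj (.inr 3) x → 2 ≤ H.edist x (.inl o) := by
      intro x hx
      rcases nb3 x hx with rfl | rfl
      · exact two_le_edist (two_ne o 1) (fun h => nadj_u1 o (Ne.symm hzo) (SimpleGraph.Adj.symm h))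
      · exact two_le_edist (two_ne o 2) (fun h => nadj_l2 o (SimpleGraph.Adj.symm h))
    have := succ_le_edist (two_ne o 3) h2
    exact le_trans (by norm_num) this
  -- eccentricity values
  have ecc_lu : ∀ u : Fin n, u ≠ z → ecc H (.inl u) = 3 := by
    intro u h
    apply le_antisymm
    · apply ecc_le
      rintro (v | b)
      · exact (U1 u v).trans (by norm_num)
      · fin_cases b
        · exact (U2 u).trans (by norm_num)
        · exact (U3 u).trans (by norm_num)
        · exact U4 u
        · exact U5 u
        · exact U6' u h
    · exact le_ecc_of_edist (by rw [SimpleGraph.edist_comm]; exact L1 u)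
  have ecc_lz : ecc H (.inl z) = 4 := by
    apply le_antisymm
    · apply ecc_le
      rintro (v | b)
      · exact (U1 z v).trans (by norm_num)
      · fin_cases b
        · exact (U2 z).trans (by norm_num)
        · exact (U3 z).trans (by norm_num)
        · exact (U4 z).trans (by norm_num)
        · exact (U5 z).trans (by norm_num)
        · exact U6 z
    · exact le_ecc_of_edist (by rw [SimpleGraph.edist_comm]; exact L3)
  have ecc_r0 : ecc H (.inr 0) = 3 := by
    apply le_antisymm
    · apply ecc_le
      rintro (v | b)
      · rw [SimpleGraph.edist_comm]; exact (U2 v).trans (by norm_num)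
      · fin_cases b
        · simp [SimpleGraph.edist_self]
        · exact U01
        · exact (adj_edist_le_one a02).trans (by norm_num)
        · exact U03.trans (by norm_num)
        · exact U04.trans (by norm_num)
    · exact le_ecc_of_edist (by rw [SimpleGraph.edist_comm]; exact L4)
  have ecc_r1 : ecc H (.inr 1) = 3 := by
    apply le_antisymm
    · apply ecc_le
      rintro (v | b)
      · rw [SimpleGraph.edist_comm]; exact (U3 v).trans (by norm_num)
      · fin_cases b
        · exact (by rw [SimpleGraph.edist_comm]; exact U01)
        · simp [SimpleGraph.edist_self]
        · exact U12.trans (by norm_num)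
        · exact (adj_edist_le_one a13).trans (by norm_num)
        · exact U14
    · exact le_ecc_of_edist L4
  have ecc_r2 : ecc H (.inr 2) = 3 := by
    apply le_antisymm
    · apply ecc_le
      rintro (v | b)
      · exact (by rw [SimpleGraph.edist_comm]; exact U4 v)
      · fin_cases b
        · exact (adj_edist_le_one (SimpleGraph.Adj.symm a02)).trans (by norm_num)
        · rw [SimpleGraph.edist_comm]; exact U12.trans (by norm_num)
        · simp [SimpleGraph.edist_self]
        · exact (adj_edist_le_one a23).trans (by norm_num)
        · exact (adj_edist_le_one a24).trans (by norm_num)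
    · exact le_ecc_of_edist L2
  have ecc_r3 : ecc H (.inr 3) = 3 := by
    apply le_antisymm
    · apply ecc_le
      rintro (v | b)
      · exact (by rw [SimpleGraph.edist_comm]; exact U5 v)
      · fin_cases b
        · rw [SimpleGraph.edist_comm]; exact U03.trans (by norm_num)
        · exact le_trans (adj_edist_le_one (SimpleGraph.Adj.symm a13)) (by norm_num)
        · exact le_trans (adj_edist_le_one (SimpleGraph.Adj.symm a23)) (by norm_num)
        · simp [SimpleGraph.edist_self]
        · exact U34.trans (by norm_num)
    · exact le_ecc_of_edist L5
  have ecc_r4 : ecc H (.inr 4) = 4 := by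
    apply le_antisymm
    · apply ecc_le
      rintro (v | b)
      · exact (by rw [SimpleGraph.edist_comm]; exact U6 v)
      · fin_cases b
        · rw [SimpleGraph.edist_comm]; exact U04.trans (by norm_num)
        · rw [SimpleGraph.edist_comm]; exact U14.trans (by norm_num)
        · exact (adj_edist_le_one (SimpleGraph.Adj.symm a24)).trans (by norm_num)
        · rw [SimpleGraph.edist_comm]; exact U34.trans (by norm_num)
        · simp [SimpleGraph.edist_self]
    · exact le_ecc_of_edist L3
  -- radius
  have hrad : graphRadius H = 3 := by
    apply le_antisymm
    · exact (radius_le_ecc (G := H) (.inr 0)).trans (le_of_eq ecc_r0)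
    · apply le_radius
      rintro (u | b)
      · rcases eq_or_ne u z with rfl | h
        · rw [ecc_lz]; norm_num
        · rw [ecc_lu u h]
      · fin_cases b
        · exact le_of_eq ecc_r0.symm
        · exact le_of_eq ecc_r1.symm
        · exact le_of_eq ecc_r2.symm
        · exact le_of_eq ecc_r3.symm
        · exact le_trans (by norm_num) (le_of_eq ecc_r4.symm)
  -- eccentricity bounded everywhere (for connectivity)
  have eall : ∀ x : Fin n ⊕ Fin 5, ecc H x ≤ 4 := by
    rintro (u | b)
    · rcases eq_or_ne u z with rfl | h
      · rw [ecc_lz]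
      · rw [ecc_lu u h]; norm_num
    · fin_cases b
      · exact (le_of_eq ecc_r0).trans (by norm_num)
      · exact (le_of_eq ecc_r1).trans (by norm_num)
      · exact (le_of_eq ecc_r2).trans (by norm_num)
      · exact (le_of_eq ecc_r3).trans (by norm_num)
      · exact le_of_eq ecc_r4
  have hconn : H.Connected := by
    rw [SimpleGraph.connected_iff]
    refine ⟨?_, ⟨.inr 0⟩⟩
    have hreach : ∀ x : Fin n ⊕ Fin 5, H.Reachable x (.inr 0) := by
      intro x
      apply SimpleGraph.reachable_of_edist_ne_top
      have h4t : (4:ℕ∞) < ⊤ := by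
        have := ENat.coe_lt_top (n := 4)
        simpa using this
      exact ((edist_le_ecc.trans (eall x)).trans_lt h4t).ne
    intro x y
    exact (hreach x).trans (hreach y).symm
  -- the noncentral set
  have hset : {u : Fin n ⊕ Fin 5 | ecc H u ≠ graphRadius H} = {.inl z, .inr 4} := by
    ext x
    simp only [Set.mem_setOf_eq, hrad, Set.mem_insert_iff, Set.mem_singleton_iff]
    constructor
    · intro hx
      rcases x with u | b
      · rcases eq_or_ne u z with rfl | h
        · left; rfl
        · exact absurd (ecc_lu u h) hx
      · fin_cases b
        · exact absurd ecc_r0 hx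
        · exact absurd ecc_r1 hx
        · exact absurd ecc_r2 hx
        · exact absurd ecc_r3 hx
        · right; rfl
    · rintro (rfl | rfl)
      · rw [ecc_lz]; norm_num
      · rw [ecc_r4]; norm_num
  refine ⟨hconn, ?_, ?_⟩
  · rw [hrad]; norm_num
  · rw [hset, Set.ncard_pair (by simp)]



end Upper

section Lower
variable {n k : ℕ} {H : SimpleGraph (Fin n ⊕ Fin k)}

/-- helper: distance ≤ 2 means adjacent or a common neighbor exists -/
lemma adj_or_mid {V : Type*} {G : SimpleGraph V} {u v : V} (hne : u ≠ v)
    (h : G.edist u v ≤ 2) : G.Adj u v ∨ ∃ x, G.Adj u x ∧ G.Adj x v := by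
  have htop : G.edist u v ≠ ⊤ := by
    intro ht
    rw [ht] at h
    exact absurd h (by simp)
  obtain ⟨p, hp⟩ := SimpleGraph.exists_walk_of_edist_ne_top htop
  have hlen : p.length ≤ 2 := by
    have h2 : (p.length : ℕ∞) ≤ 2 := hp.le.trans h
    exact_mod_cast h2
  cases p with
  | nil => exact absurd rfl hne
  | @cons _ x _ h1 q =>
    cases q with
    | nil => exact Or.inl h1
    | @cons _ y _ h2 r =>
      cases r with
      | nil => exact Or.inr ⟨x, h1, h2⟩
      | cons h3 t =>
        exfalso
        simp [SimpleGraph.Walk.length_cons] at hlen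

/-- Case: two B-vertices reachable only through a single C-vertex `c`,
which is at distance ≥ 3 from `c'`. -/
lemma aux_gate2 (hrad3 : graphRadius H = 3)
    (hcount : {u : Fin n ⊕ Fin k | ecc H u ≠ graphRadius H}.ncard = 2)
    {c c' b1 b2 : Fin k}
    (hcb1 : c ≠ b1) (hcb2 : c ≠ b2) (hc'b1 : c' ≠ b1) (hc'b2 : c' ≠ b2) (hb12 : b1 ≠ b2)
    (hfar : 3 ≤ H.edist (.inr c') (.inr c))
    (hKb1 : ∀ v : Fin n, ¬ H.Adj (.inl v) (.inr b1))
    (hKb2 : ∀ v : Fin n, ¬ H.Adj (.inl v) (.inr b2))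
    (hc'1 : ¬ H.Adj (.inr c') (.inr b1)) (hc'2 : ¬ H.Adj (.inr c') (.inr b2))
    (huniv : ∀ a : Fin k, a = c ∨ a = c' ∨ a = b1 ∨ a = b2) : False := by
  have hgate : ∀ x y, H.Adj x y →
      x ∈ ({x | x = .inr b1 ∨ x = .inr b2} : Set (Fin n ⊕ Fin k)) ∨ x = Sum.inr c →
      True := fun _ _ _ _ => trivial
  clear hgate
  have hgate : ∀ x y, H.Adj x y →
      y ∈ ({x | x = .inr b1 ∨ x = .inr b2} : Set (Fin n ⊕ Fin k)) →
      x ∈ ({x | x = .inr b1 ∨ x = .inr b2} : Set (Fin n ⊕ Fin k)) ∨ x = Sum.inr c := by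
    rintro x y hxy (rfl | rfl)
    · rcases x with v | a
      · exact absurd hxy (hKb1 v)
      · rcases huniv a with rfl | rfl | rfl | rfl
        · exact Or.inr rfl
        · exact absurd hxy hc'1
        · exact Or.inl (Or.inl rfl)
        · exact Or.inl (Or.inr rfl)
    · rcases x with v | a
      · exact absurd hxy (hKb2 v)
      · rcases huniv a with rfl | rfl | rfl | rfl
        · exact Or.inr rfl
        · exact absurd hxy hc'2
        · exact Or.inl (Or.inl rfl)
        · exact Or.inl (Or.inr rfl)
  have hnotS : (Sum.inr c' : Fin n ⊕ Fin k) ∉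
      ({x | x = .inr b1 ∨ x = .inr b2} : Set (Fin n ⊕ Fin k)) := by
    rintro (h | h)
    · exact hc'b1 (Sum.inr_injective h)
    · exact hc'b2 (Sum.inr_injective h)
  have hd1 : 4 ≤ H.edist (.inr c') (.inr b1) := by
    have hg := gateway (G := H) (g := Sum.inr c) (Or.inl rfl : (Sum.inr b1 : Fin n ⊕ Fin k) ∈ _)
      hnotS hgate
    calc (4:ℕ∞) = 3 + 1 := by norm_num
      _ ≤ H.edist (.inr c') (.inr c) + H.edist (.inr c) (.inr b1) :=
          add_le_add hfar (one_le_edist (fun h => hcb1 (Sum.inr_injective h)))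
      _ ≤ _ := hg
  have hd2 : 4 ≤ H.edist (.inr c') (.inr b2) := by
    have hg := gateway (G := H) (g := Sum.inr c) (Or.inr rfl : (Sum.inr b2 : Fin n ⊕ Fin k) ∈ _)
      hnotS hgate
    calc (4:ℕ∞) = 3 + 1 := by norm_num
      _ ≤ H.edist (.inr c') (.inr c) + H.edist (.inr c) (.inr b2) :=
          add_le_add hfar (one_le_edist (fun h => hcb2 (Sum.inr_injective h)))
      _ ≤ _ := hg
  exact three_noncentral_false hrad3 hcount
    (fun h => hc'b1 (Sum.inr_injective h))
    (fun h => hc'b2 (Sum.inr_injective h))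
    (fun h => hb12 (Sum.inr_injective h))
    (le_ecc_of_edist hd1)
    (le_ecc_of_edist (by rw [SimpleGraph.edist_comm]; exact hd1))
    (le_ecc_of_edist (by rw [SimpleGraph.edist_comm]; exact hd2))

/-- Case: `b` has no C-neighbour, `β` is adjacent to `b` and to exactly one
C-vertex `c`. -/
lemma aux_caseI (hrad3 : graphRadius H = 3)
    (hcount : {u : Fin n ⊕ Fin k | ecc H u ≠ graphRadius H}.ncard = 2)
    (hecc3 : ∀ x, 3 ≤ ecc H x)
    {c c' b β : Fin k}
    (hcb : c ≠ b) (hcβ : c ≠ β) (hc'b : c' ≠ b) (hc'β : c' ≠ β) (hbβ : b ≠ β)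
    (hdc : ∀ w : Fin n, H.edist (.inr c) (.inl w) ≤ 2)
    (hKb : ∀ v : Fin n, ¬ H.Adj (.inl v) (.inr b))
    (hKβ : ∀ v : Fin n, ¬ H.Adj (.inl v) (.inr β))
    (hnbc : ¬ H.Adj (.inr b) (.inr c)) (hnbc' : ¬ H.Adj (.inr b) (.inr c'))
    (hβc : H.Adj (.inr β) (.inr c)) (hnβc' : ¬ H.Adj (.inr β) (.inr c'))
    (hadjbβ : H.Adj (.inr b) (.inr β))
    (huniv : ∀ a : Fin k, a = c ∨ a = c' ∨ a = b ∨ a = β) : False := by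
  -- the eccentricity witness of c must be c'
  obtain ⟨x, hx⟩ := exists_edist_ge_three (hecc3 (.inr c))
  have hx3 : 3 ≤ H.edist (.inr c) (.inr c') := by
    rcases x with w | a
    · have := (hx.trans (hdc w))
      norm_num at this
    · rcases huniv a with h | h | h | h <;> rw [h] at hx
      · rw [SimpleGraph.edist_self] at hx
        norm_num at hx
      · exact hx
      · have hle : H.edist (.inr c) (.inr b) ≤ 2 :=
          edist_le_two_chain (SimpleGraph.Adj.symm hβc) (SimpleGraph.Adj.symm hadjbβ)
        have := hx.trans hle
        norm_num at this
      · have := hx.trans (adj_edist_le_one (SimpleGraph.Adj.symm hβc))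
        norm_num at this
  exact aux_gate2 hrad3 hcount hcb hcβ hc'b hc'β hbβ
    (by rw [SimpleGraph.edist_comm]; exact hx3) hKb hKβ
    (fun h => hnbc' (SimpleGraph.Adj.symm h)) (fun h => hnβc' (SimpleGraph.Adj.symm h))
    (fun a => by rcases huniv a with h | h | h | h <;> tauto)

/-- Case: C = {c1,c2} at distance ≥ 3, b1 adjacent (among C) exactly to c1,
b2 exactly to c2, and b1, b2 not adjacent. -/
lemma aux_diff_nonadj (hrad3 : graphRadius H = 3)
    (hcount : {u : Fin n ⊕ Fin k | ecc H u ≠ graphRadius H}.ncard = 2)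
    {c1 c2 b1 b2 : Fin k}
    (hc12 : c1 ≠ c2) (hc1b1 : c1 ≠ b1) (hc1b2 : c1 ≠ b2) (hc2b1 : c2 ≠ b1) (hc2b2 : c2 ≠ b2)
    (hfar : 3 ≤ H.edist (.inr c1) (.inr c2))
    (hKb1 : ∀ v : Fin n, ¬ H.Adj (.inl v) (.inr b1))
    (hKb2 : ∀ v : Fin n, ¬ H.Adj (.inl v) (.inr b2))
    (hnb1c2 : ¬ H.Adj (.inr b1) (.inr c2)) (hnb2c1 : ¬ H.Adj (.inr b2) (.inr c1))
    (hnbb : ¬ H.Adj (.inr b1) (.inr b2))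
    (huniv : ∀ a : Fin k, a = c1 ∨ a = c2 ∨ a = b1 ∨ a = b2) : False := by
  have hgate1 : ∀ x y, H.Adj x y →
      y ∈ ({x | x = .inr b1} : Set (Fin n ⊕ Fin k)) →
      x ∈ ({x | x = .inr b1} : Set (Fin n ⊕ Fin k)) ∨ x = Sum.inr c1 := by
    rintro x y hxy rfl
    rcases x with v | a
    · exact absurd hxy (hKb1 v)
    · rcases huniv a with rfl | rfl | rfl | rfl
      · exact Or.inr rfl
      · exact absurd (SimpleGraph.Adj.symm hxy) hnb1c2
      · exact Or.inl rfl
      · exact absurd (SimpleGraph.Adj.symm hxy) hnbb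
  have hgate2 : ∀ x y, H.Adj x y →
      y ∈ ({x | x = .inr b2} : Set (Fin n ⊕ Fin k)) →
      x ∈ ({x | x = .inr b2} : Set (Fin n ⊕ Fin k)) ∨ x = Sum.inr c2 := by
    rintro x y hxy rfl
    rcases x with v | a
    · exact absurd hxy (hKb2 v)
    · rcases huniv a with rfl | rfl | rfl | rfl
      · exact absurd (SimpleGraph.Adj.symm hxy) hnb2c1
      · exact Or.inr rfl
      · exact absurd hxy hnbb
      · exact Or.inl rfl
  have hd1 : 4 ≤ H.edist (.inr c2) (.inr b1) := by
    have hg := gateway (G := H) (S := {x | x = .inr b1}) (g := Sum.inr c1)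
      (rfl : (Sum.inr b1 : Fin n ⊕ Fin k) ∈ ({x | x = .inr b1} : Set (Fin n ⊕ Fin k)))
      (fun h => hc2b1 (Sum.inr_injective h)) hgate1
    calc (4:ℕ∞) = 3 + 1 := by norm_num
      _ ≤ H.edist (.inr c2) (.inr c1) + H.edist (.inr c1) (.inr b1) := by
          apply add_le_add _ (one_le_edist (fun h => hc1b1 (Sum.inr_injective h)))
          rw [SimpleGraph.edist_comm]
          exact hfar
      _ ≤ _ := hg
  have hd2 : 4 ≤ H.edist (.inr c1) (.inr b2) := by
    have hg := gateway (G := H) (S := {x | x = .inr b2}) (g := Sum.inr c2)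
      (rfl : (Sum.inr b2 : Fin n ⊕ Fin k) ∈ ({x | x = .inr b2} : Set (Fin n ⊕ Fin k)))
      (fun h => hc1b2 (Sum.inr_injective h)) hgate2
    calc (4:ℕ∞) = 3 + 1 := by norm_num
      _ ≤ H.edist (.inr c1) (.inr c2) + H.edist (.inr c2) (.inr b2) :=
          add_le_add hfar (one_le_edist (fun h => hc2b2 (Sum.inr_injective h)))
      _ ≤ _ := hg
  exact three_noncentral_false hrad3 hcount
    (fun h => hc12 (Sum.inr_injective h))
    (fun h => hc1b1 (Sum.inr_injective h))
    (fun h => hc2b1 (Sum.inr_injective h))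
    (le_ecc_of_edist hd2)
    (le_ecc_of_edist hd1)
    (le_ecc_of_edist (by rw [SimpleGraph.edist_comm]; exact hd1))

/-- Case: C = {c1,c2} at distance ≥ 3, b1 ~ c1, b2 ~ c2, b1 ~ b2: the graph
would be self-centered, contradicting that exactly two vertices are non-central. -/
lemma aux_diff_adj (hrad3 : graphRadius H = 3)
    (hcount : {u : Fin n ⊕ Fin k | ecc H u ≠ graphRadius H}.ncard = 2)
    (hecc3 : ∀ x, 3 ≤ ecc H x)
    {c1 c2 b1 b2 : Fin k} {v1 v2 : Fin n}
    (hdK : ∀ u v : Fin n, H.edist (.inl u) (.inl v) ≤ 1)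
    (hdc1 : ∀ w : Fin n, H.edist (.inr c1) (.inl w) ≤ 2)
    (hdc2 : ∀ w : Fin n, H.edist (.inr c2) (.inl w) ≤ 2)
    (hv1 : H.Adj (.inr c1) (.inl v1)) (hv2 : H.Adj (.inr c2) (.inl v2))
    (hv12 : H.Adj (.inl v1) (.inl v2))
    (hb1c1 : H.Adj (.inr b1) (.inr c1)) (hb2c2 : H.Adj (.inr b2) (.inr c2))
    (hbb : H.Adj (.inr b1) (.inr b2))
    (huniv : ∀ a : Fin k, a = c1 ∨ a = c2 ∨ a = b1 ∨ a = b2) : False := by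
  have hd12 : H.edist (.inr c1) (.inr c2) ≤ 3 :=
    edist_le_three_chain hv1 hv12 (SimpleGraph.Adj.symm hv2)
  have hball : ∀ x, ecc H x ≤ 3 := by
    rintro (w | a)
    · apply ecc_le
      rintro (u | a)
      · exact (hdK w u).trans (by norm_num)
      · rcases huniv a with h | h | h | h <;> rw [h]
        · rw [SimpleGraph.edist_comm]
          exact (hdc1 w).trans (by norm_num)
        · rw [SimpleGraph.edist_comm]
          exact (hdc2 w).trans (by norm_num)
        · calc H.edist (.inl w) (.inr b1)
              ≤ H.edist (.inl w) (.inr c1) + H.edist (.inr c1) (.inr b1) :=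
                SimpleGraph.edist_triangle
            _ ≤ 2 + 1 := add_le_add (by rw [SimpleGraph.edist_comm]; exact hdc1 w)
                (adj_edist_le_one (SimpleGraph.Adj.symm hb1c1))
            _ = 3 := by norm_num
        · calc H.edist (.inl w) (.inr b2)
              ≤ H.edist (.inl w) (.inr c2) + H.edist (.inr c2) (.inr b2) :=
                SimpleGraph.edist_triangle
            _ ≤ 2 + 1 := add_le_add (by rw [SimpleGraph.edist_comm]; exact hdc2 w)
                (adj_edist_le_one (SimpleGraph.Adj.symm hb2c2))
            _ = 3 := by norm_num
    · rcases huniv a with h | h | h | h <;> rw [h]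
      · apply ecc_le
        rintro (u | a')
        · exact (hdc1 u).trans (by norm_num)
        · rcases huniv a' with h' | h' | h' | h' <;> rw [h']
          · simp [SimpleGraph.edist_self]
          · exact hd12
          · exact (adj_edist_le_one (SimpleGraph.Adj.symm hb1c1)).trans (by norm_num)
          · exact (edist_le_two_chain (SimpleGraph.Adj.symm hb1c1) hbb).trans (by norm_num)
      · apply ecc_le
        rintro (u | a')
        · exact (hdc2 u).trans (by norm_num)
        · rcases huniv a' with h' | h' | h' | h' <;> rw [h']
          · rw [SimpleGraph.edist_comm]
            exact hd12
          · simp [SimpleGraph.edist_self]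
          · exact (edist_le_two_chain (SimpleGraph.Adj.symm hb2c2) (SimpleGraph.Adj.symm hbb)).trans (by norm_num)
          · exact (adj_edist_le_one (SimpleGraph.Adj.symm hb2c2)).trans (by norm_num)
      · apply ecc_le
        rintro (u | a')
        · calc H.edist (.inr b1) (.inl u)
              ≤ H.edist (.inr b1) (.inr c1) + H.edist (.inr c1) (.inl u) :=
                SimpleGraph.edist_triangle
            _ ≤ 1 + 2 := add_le_add (adj_edist_le_one hb1c1) (hdc1 u)
            _ = 3 := by norm_num
        · rcases huniv a' with h' | h' | h' | h' <;> rw [h']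
          · exact (adj_edist_le_one hb1c1).trans (by norm_num)
          · exact (edist_le_two_chain hbb hb2c2).trans (by norm_num)
          · simp [SimpleGraph.edist_self]
          · exact (adj_edist_le_one hbb).trans (by norm_num)
      · apply ecc_le
        rintro (u | a')
        · calc H.edist (.inr b2) (.inl u)
              ≤ H.edist (.inr b2) (.inr c2) + H.edist (.inr c2) (.inl u) :=
                SimpleGraph.edist_triangle
            _ ≤ 1 + 2 := add_le_add (adj_edist_le_one hb2c2) (hdc2 u)
            _ = 3 := by norm_num
        · rcases huniv a' with h' | h' | h' | h' <;> rw [h']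
          · exact (edist_le_two_chain (SimpleGraph.Adj.symm hbb) hb1c1).trans (by norm_num)
          · exact (adj_edist_le_one hb2c2).trans (by norm_num)
          · exact (adj_edist_le_one (SimpleGraph.Adj.symm hbb)).trans (by norm_num)
          · simp [SimpleGraph.edist_self]
  have hempty : {u : Fin n ⊕ Fin k | ecc H u ≠ graphRadius H} = ∅ := by
    ext x
    simp only [Set.mem_setOf_eq, Set.mem_empty_iff_false, iff_false, not_not, ne_eq]
    rw [hrad3]
    exact le_antisymm (hball x) (hecc3 x)
  rw [hempty, Set.ncard_empty] at hcount
  omega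

/-- Case: C = {c1,c2} at distance ≤ 2 and both b1,b2 have a C-neighbour. -/
lemma aux_close (hrad3 : graphRadius H = 3)
    (hcount : {u : Fin n ⊕ Fin k | ecc H u ≠ graphRadius H}.ncard = 2)
    (hecc3 : ∀ x, 3 ≤ ecc H x)
    {c1 c2 b1 b2 : Fin k}
    (hc12 : c1 ≠ c2) (hb12 : b1 ≠ b2)
    (hdK : ∀ u v : Fin n, H.edist (.inl u) (.inl v) ≤ 1)
    (hdc1 : ∀ w : Fin n, H.edist (.inr c1) (.inl w) ≤ 2)
    (hdc2 : ∀ w : Fin n, H.edist (.inr c2) (.inl w) ≤ 2)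
    (hd12 : H.edist (.inr c1) (.inr c2) ≤ 2)
    (hb1 : H.Adj (.inr b1) (.inr c1) ∨ H.Adj (.inr b1) (.inr c2))
    (hb2 : H.Adj (.inr b2) (.inr c1) ∨ H.Adj (.inr b2) (.inr c2))
    (huniv : ∀ a : Fin k, a = c1 ∨ a = c2 ∨ a = b1 ∨ a = b2) : False := by
  -- witness for ecc c1
  have W1 : ∃ β, (β = b1 ∨ β = b2) ∧ 3 ≤ H.edist (.inr c1) (.inr β) := by
    obtain ⟨x, hx⟩ := exists_edist_ge_three (hecc3 (.inr c1))
    rcases x with w | a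
    · have := hx.trans (hdc1 w)
      norm_num at this
    · rcases huniv a with h | h | h | h <;> rw [h] at hx
      · rw [SimpleGraph.edist_self] at hx
        norm_num at hx
      · have := hx.trans hd12
        norm_num at this
      · exact ⟨b1, Or.inl rfl, hx⟩
      · exact ⟨b2, Or.inr rfl, hx⟩
  have W2 : ∃ β, (β = b1 ∨ β = b2) ∧ 3 ≤ H.edist (.inr c2) (.inr β) := by
    obtain ⟨x, hx⟩ := exists_edist_ge_three (hecc3 (.inr c2))
    rcases x with w | a
    · have := hx.trans (hdc2 w)
      norm_num at this
    · rcases huniv a with h | h | h | h <;> rw [h] at hx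
      · have h' : H.edist (.inr c2) (.inr c1) ≤ 2 := by
          rw [SimpleGraph.edist_comm]
          exact hd12
        have := hx.trans h'
        norm_num at this
      · rw [SimpleGraph.edist_self] at hx
        norm_num at hx
      · exact ⟨b1, Or.inl rfl, hx⟩
      · exact ⟨b2, Or.inr rfl, hx⟩
  obtain ⟨β1, hβ1mem, hβ1d⟩ := W1
  obtain ⟨β2, hβ2mem, hβ2d⟩ := W2
  have hβ1c1 : ¬ H.Adj (.inr β1) (.inr c1) := by
    intro h
    have := hβ1d.trans (adj_edist_le_one (SimpleGraph.Adj.symm h))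
    norm_num at this
  have hβ2c2 : ¬ H.Adj (.inr β2) (.inr c2) := by
    intro h
    have := hβ2d.trans (adj_edist_le_one (SimpleGraph.Adj.symm h))
    norm_num at this
  have hβ1c2 : H.Adj (.inr β1) (.inr c2) := by
    rcases hβ1mem with rfl | rfl
    · exact hb1.resolve_left hβ1c1
    · exact hb2.resolve_left hβ1c1
  have hβ2c1 : H.Adj (.inr β2) (.inr c1) := by
    rcases hβ2mem with rfl | rfl
    · exact hb1.resolve_right hβ2c2
    · exact hb2.resolve_right hβ2c2
  have hβne : β1 ≠ β2 := by
    rintro rfl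
    exact hβ1c1 hβ2c1
  rcases adj_or_mid (fun h => hc12 (Sum.inr_injective h)) hd12 with hadj | ⟨x, hx1, hx2⟩
  · have hle : H.edist (.inr c1) (.inr β1) ≤ 2 := edist_le_two_chain hadj (SimpleGraph.Adj.symm hβ1c2)
    have := hβ1d.trans hle
    norm_num at this
  · rcases x with v | a
    · have hvc1 : H.Adj (.inl v) (.inr c1) := SimpleGraph.Adj.symm hx1
      have hvc2 : H.Adj (.inl v) (.inr c2) := hx2
      have hecc2 : ecc H (.inl v) ≤ 2 := by
        apply ecc_le
        rintro (u | a)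
        · exact (hdK v u).trans (by norm_num)
        · rcases huniv a with h | h | h | h <;> rw [h]
          · exact (adj_edist_le_one hvc1).trans (by norm_num)
          · exact (adj_edist_le_one hvc2).trans (by norm_num)
          · rcases hb1 with h1 | h1
            · exact edist_le_two_chain hvc1 (SimpleGraph.Adj.symm h1)
            · exact edist_le_two_chain hvc2 (SimpleGraph.Adj.symm h1)
          · rcases hb2 with h2 | h2
            · exact edist_le_two_chain hvc1 (SimpleGraph.Adj.symm h2)
            · exact edist_le_two_chain hvc2 (SimpleGraph.Adj.symm h2)
      have := (hecc3 (.inl v)).trans hecc2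
      norm_num at this
    · have hb1β : b1 = β1 ∨ b1 = β2 := by
        rcases hβ1mem with rfl | rfl
        · exact Or.inl rfl
        · rcases hβ2mem with rfl | rfl
          · exact Or.inr rfl
          · exact absurd rfl hβne
      have hb2β : b2 = β1 ∨ b2 = β2 := by
        rcases hβ2mem with rfl | rfl
        · rcases hβ1mem with rfl | rfl
          · exact absurd rfl hβne
          · exact Or.inl rfl
        · exact Or.inr rfl
      rcases huniv a with h | h | h | h <;> rw [h] at hx1 hx2
      · exact H.loopless.irrefl _ hx1
      · exact H.loopless.irrefl _ hx2
      · rcases hb1β with h1 | h1 <;> rw [h1] at hx1 hx2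
        · exact hβ1c1 (SimpleGraph.Adj.symm hx1)
        · exact hβ2c2 hx2
      · rcases hb2β with h2 | h2 <;> rw [h2] at hx1 hx2
        · exact hβ1c1 (SimpleGraph.Adj.symm hx1)
        · exact hβ2c2 hx2

lemma univ_swap12 {α : Type*} {x1 x2 x3 x4 : α}
    (h : ∀ a : α, a = x1 ∨ a = x2 ∨ a = x3 ∨ a = x4) :
    ∀ a : α, a = x2 ∨ a = x1 ∨ a = x3 ∨ a = x4 := by
  intro a
  rcases h a with h' | h' | h' | h' <;> tauto

lemma univ_swap34 {α : Type*} {x1 x2 x3 x4 : α}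
    (h : ∀ a : α, a = x1 ∨ a = x2 ∨ a = x3 ∨ a = x4) :
    ∀ a : α, a = x1 ∨ a = x2 ∨ a = x4 ∨ a = x3 := by
  intro a
  rcases h a with h' | h' | h' | h' <;> tauto

lemma lower_bound (n k : ℕ) (hn : 2 ≤ n) (H : SimpleGraph (Fin n ⊕ Fin k))
    (hASC : IsASC 3 H)
    (hind : ∀ u v : Fin n, H.Adj (Sum.inl u) (Sum.inl v) ↔ u ≠ v) : 5 ≤ k := by
  classical
  by_contra hk
  push_neg at hk
  have hk4 : k ≤ 4 := by omega
  obtain ⟨hconn, hrad, hcount⟩ := hASC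
  have hrad3 : graphRadius H = 3 := by rw [hrad]; norm_num
  have hecc3 : ∀ x, 3 ≤ ecc H x := by
    intro x
    rw [← hrad3]
    exact radius_le_ecc x
  set z : Fin n := ⟨0, by omega⟩ with hzdef
  set o : Fin n := ⟨1, by omega⟩ with hodef
  have hzo : z ≠ o := by simp [hzdef, hodef, Fin.ext_iff]
  have aK : ∀ u v : Fin n, u ≠ v → H.Adj (.inl u) (.inl v) := fun u v h => (hind u v).mpr h
  have hdK : ∀ u v : Fin n, H.edist (.inl u) (.inl v) ≤ 1 := by
    intro u v
    rcases eq_or_ne u v with rfl | h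
    · simp [SimpleGraph.edist_self]
    · exact adj_edist_le_one (aK u v h)
  set C : Set (Fin k) := {a | ∃ v : Fin n, H.Adj (.inr a) (.inl v)} with hCdef
  have hBnoadj : ∀ b : Fin k, b ∉ C → ∀ v : Fin n, ¬ H.Adj (.inr b) (.inl v) :=
    fun b hb v hadj => hb ⟨v, hadj⟩
  have hdC : ∀ a ∈ C, ∀ w : Fin n, H.edist (.inr a) (.inl w) ≤ 2 := by
    intro a ha w
    obtain ⟨v, hv⟩ := ha
    rcases eq_or_ne v w with rfl | h
    · exact (adj_edist_le_one hv).trans (by norm_num)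
    · exact edist_le_two_chain hv (aK v w h)
  have hwit : ∀ w : Fin n, ∃ b : Fin k, b ∉ C ∧ 3 ≤ H.edist (.inl w) (.inr b) := by
    intro w
    obtain ⟨x, hx⟩ := exists_edist_ge_three (hecc3 (.inl w))
    rcases x with v | a
    · have := hx.trans (hdK w v)
      norm_num at this
    · by_cases ha : a ∈ C
      · have hle : H.edist (.inl w) (.inr a) ≤ 2 := by
          rw [SimpleGraph.edist_comm]
          exact hdC a ha w
        have := hx.trans hle
        norm_num at this
      · exact ⟨a, ha, hx⟩
  have hnbr : ∀ x : Fin n ⊕ Fin k, ∃ y, H.Adj x y := by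
    intro x
    have h2 : ∃ y : Fin n ⊕ Fin k, y ≠ x := by
      rcases x with u | a
      · rcases eq_or_ne u z with rfl | h
        · exact ⟨.inl o, by simp [Ne.symm hzo]⟩
        · exact ⟨.inl z, by simp [Ne.symm h]⟩
      · exact ⟨.inl z, by simp⟩
    obtain ⟨y, hy⟩ := h2
    obtain ⟨p⟩ := hconn.preconnected x y
    cases p with
    | nil => exact absurd rfl hy.symm
    | cons h q => exact ⟨_, h⟩
  have hCne : C.Nonempty := by
    rw [Set.nonempty_iff_ne_empty]
    intro hCe
    obtain ⟨b, hb, -⟩ := hwit z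
    have hclosed : ∀ x y : Fin n ⊕ Fin k, H.Adj x y →
        y ∈ (Set.range Sum.inr : Set (Fin n ⊕ Fin k)) → x ∈ Set.range Sum.inr := by
      rintro x y hxy ⟨a, rfl⟩
      rcases x with v | a'
      · exfalso
        have haC : a ∈ C := ⟨v, SimpleGraph.Adj.symm hxy⟩
        rw [hCe] at haC
        exact haC
      · exact ⟨a', rfl⟩
    exact closed_not_reachable hclosed
      (by rintro ⟨a, ha⟩; exact nomatch ha) ⟨b, rfl⟩
      (hconn.preconnected (.inl z) (.inr b))
  obtain ⟨b0, hb0C, -⟩ := hwit z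
  have hB2 : ∃ b1 : Fin k, b1 ∉ C ∧ b1 ≠ b0 := by
    by_contra hcon
    push_neg at hcon
    obtain ⟨y, hy⟩ := hnbr (.inr b0)
    rcases y with v | a
    · exact hBnoadj b0 hb0C v hy
    · by_cases haC : a ∈ C
      · obtain ⟨v, hv⟩ := haC
        have hecc2 : ecc H (.inl v) ≤ 2 := by
          apply ecc_le
          rintro (u | c)
          · exact (hdK v u).trans (by norm_num)
          · by_cases hcC : c ∈ C
            · rw [SimpleGraph.edist_comm]
              exact hdC c hcC v
            · have hcb : c = b0 := hcon c hcC
              rw [hcb]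
              exact edist_le_two_chain (SimpleGraph.Adj.symm hv) (SimpleGraph.Adj.symm hy)
        have := (hecc3 (.inl v)).trans hecc2
        norm_num at this
      · have hab : a = b0 := hcon a haC
        rw [hab] at hy
        exact H.loopless.irrefl _ hy
  obtain ⟨b1', hb1'C, hb1'ne⟩ := hB2
  have hcard : C.ncard + Cᶜ.ncard = k := by
    have h := Set.ncard_add_ncard_compl C
    simpa using h
  have hCge : 1 ≤ C.ncard := (Set.ncard_pos (Set.toFinite _)).mpr hCne
  have hBge : 2 ≤ Cᶜ.ncard := by
    have hsub : ({b1', b0} : Set (Fin k)) ⊆ Cᶜ := by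
      rintro x (rfl | rfl)
      · exact hb1'C
      · exact hb0C
    have hle := Set.ncard_le_ncard hsub (Set.toFinite _)
    rw [Set.ncard_pair hb1'ne] at hle
    exact hle
  have hCcase : C.ncard = 1 ∨ (C.ncard = 2 ∧ Cᶜ.ncard = 2) := by omega
  rcases hCcase with h1 | ⟨h2, hB2'⟩
  · -- |C| = 1
    obtain ⟨c, hc⟩ := Set.ncard_eq_one.mp h1
    have hcC : c ∈ C := by rw [hc]; rfl
    obtain ⟨x, hx⟩ := exists_edist_ge_three (hecc3 (.inr c))
    have hxB : ∃ b : Fin k, b ∉ C ∧ 3 ≤ H.edist (.inr c) (.inr b) := by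
      rcases x with v | a
      · have := hx.trans (hdC c hcC v)
        norm_num at this
      · by_cases haC : a ∈ C
        · have hac : a = c := by rw [hc] at haC; exact haC
          rw [hac] at hx
          rw [SimpleGraph.edist_self] at hx
          norm_num at hx
        · exact ⟨a, haC, hx⟩
    obtain ⟨b, hbC, hcb3⟩ := hxB
    have hgate : ∀ x y, H.Adj x y → y ∈ (Sum.inr '' Cᶜ : Set (Fin n ⊕ Fin k)) →
        x ∈ (Sum.inr '' Cᶜ : Set (Fin n ⊕ Fin k)) ∨ x = .inr c := by
      rintro x y hxy ⟨b', hb', rfl⟩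
      rcases x with v | a
      · exact absurd (SimpleGraph.Adj.symm hxy) (hBnoadj b' hb' v)
      · by_cases haC : a ∈ C
        · right
          have hac : a = c := by rw [hc] at haC; exact haC
          rw [hac]
        · exact Or.inl ⟨a, haC, rfl⟩
    have hfar : ∀ w : Fin n, 4 ≤ H.edist (.inl w) (.inr b) := by
      intro w
      have hg := gateway (G := H) (S := Sum.inr '' Cᶜ) (g := .inr c) (u := .inl w)
        ⟨b, hbC, rfl⟩ (fun hm => by obtain ⟨a, -, ha⟩ := hm; injection ha) hgate
      calc (4:ℕ∞) = 1 + 3 := by norm_num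
        _ ≤ H.edist (.inl w) (.inr c) + H.edist (.inr c) (.inr b) :=
            add_le_add (one_le_edist (by simp)) hcb3
        _ ≤ _ := hg
    exact three_noncentral_false hrad3 hcount
      (fun h => hzo (Sum.inl_injective h))
      Sum.inl_ne_inr Sum.inl_ne_inr
      (le_ecc_of_edist (hfar z)) (le_ecc_of_edist (hfar o))
      (le_ecc_of_edist (by rw [SimpleGraph.edist_comm]; exact hfar z))
  · -- |C| = 2 and |B| = 2
    obtain ⟨c1, c2, hc12, hCeq⟩ := Set.ncard_eq_two.mp h2
    obtain ⟨d1, d2, hd12ne, hBeq⟩ := Set.ncard_eq_two.mp hB2'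
    have hc1C : c1 ∈ C := by rw [hCeq]; exact Or.inl rfl
    have hc2C : c2 ∈ C := by rw [hCeq]; exact Or.inr rfl
    have hd1B : d1 ∉ C := by
      have hm : d1 ∈ Cᶜ := by rw [hBeq]; exact Or.inl rfl
      exact hm
    have hd2B : d2 ∉ C := by
      have hm : d2 ∈ Cᶜ := by rw [hBeq]; exact Or.inr rfl
      exact hm
    have huniv : ∀ a : Fin k, a = c1 ∨ a = c2 ∨ a = d1 ∨ a = d2 := by
      intro a
      by_cases haC : a ∈ C
      · rw [hCeq] at haC
        rcases haC with h | h
        · exact Or.inl h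
        · exact Or.inr (Or.inl h)
      · have hm : a ∈ Cᶜ := haC
        rw [hBeq] at hm
        rcases hm with h | h
        · exact Or.inr (Or.inr (Or.inl h))
        · exact Or.inr (Or.inr (Or.inr h))
    have hKd1 : ∀ v : Fin n, ¬ H.Adj (.inl v) (.inr d1) :=
      fun v h => hBnoadj d1 hd1B v (SimpleGraph.Adj.symm h)
    have hKd2 : ∀ v : Fin n, ¬ H.Adj (.inl v) (.inr d2) :=
      fun v h => hBnoadj d2 hd2B v (SimpleGraph.Adj.symm h)
    have hdc1 : ∀ w : Fin n, H.edist (.inr c1) (.inl w) ≤ 2 := hdC c1 hc1C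
    have hdc2 : ∀ w : Fin n, H.edist (.inr c2) (.inl w) ≤ 2 := hdC c2 hc2C
    have h_c1d1 : c1 ≠ d1 := fun h => hd1B (h ▸ hc1C)
    have h_c1d2 : c1 ≠ d2 := fun h => hd2B (h ▸ hc1C)
    have h_c2d1 : c2 ≠ d1 := fun h => hd1B (h ▸ hc2C)
    have h_c2d2 : c2 ≠ d2 := fun h => hd2B (h ▸ hc2C)
    by_cases hb1or : H.Adj (.inr d1) (.inr c1) ∨ H.Adj (.inr d1) (.inr c2)
    · by_cases hb2or : H.Adj (.inr d2) (.inr c1) ∨ H.Adj (.inr d2) (.inr c2)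
      · -- both d1 and d2 have C-neighbours
        by_cases hd12close : H.edist (.inr c1) (.inr c2) ≤ 2
        · exact aux_close hrad3 hcount hecc3 hc12 hd12ne hdK hdc1 hdc2 hd12close
            hb1or hb2or huniv
        · have h3far : 3 ≤ H.edist (.inr c1) (.inr c2) :=
            enat_three_of_two_lt (not_le.mp hd12close)
          have hnotboth1 : ¬(H.Adj (.inr d1) (.inr c1) ∧ H.Adj (.inr d1) (.inr c2)) := by
            rintro ⟨ha, hb⟩
            exact hd12close (edist_le_two_chain (SimpleGraph.Adj.symm ha) hb)
          have hnotboth2 : ¬(H.Adj (.inr d2) (.inr c1) ∧ H.Adj (.inr d2) (.inr c2)) := by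
            rintro ⟨ha, hb⟩
            exact hd12close (edist_le_two_chain (SimpleGraph.Adj.symm ha) hb)
          rcases hb1or with h11 | h12 <;> rcases hb2or with h21 | h22
          · -- d1 ~ c1, d2 ~ c1
            exact aux_gate2 hrad3 hcount h_c1d1 h_c1d2 h_c2d1 h_c2d2 hd12ne
              (by rw [SimpleGraph.edist_comm]; exact h3far) hKd1 hKd2
              (fun h => hnotboth1 ⟨h11, SimpleGraph.Adj.symm h⟩)
              (fun h => hnotboth2 ⟨h21, SimpleGraph.Adj.symm h⟩)
              huniv
          · -- d1 ~ c1, d2 ~ c2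
            have hn12 : ¬ H.Adj (.inr d1) (.inr c2) := fun h => hnotboth1 ⟨h11, h⟩
            have hn21 : ¬ H.Adj (.inr d2) (.inr c1) := fun h => hnotboth2 ⟨h, h22⟩
            by_cases hbb : H.Adj (.inr d1) (.inr d2)
            · obtain ⟨v1, hv1⟩ := hc1C
              obtain ⟨v2, hv2⟩ := hc2C
              have hv12ne : v1 ≠ v2 := by
                rintro rfl
                exact hd12close (edist_le_two_chain hv1 (SimpleGraph.Adj.symm hv2))
              exact aux_diff_adj hrad3 hcount hecc3 hdK hdc1 hdc2 hv1 hv2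
                (aK v1 v2 hv12ne) h11 h22 hbb huniv
            · exact aux_diff_nonadj hrad3 hcount hc12 h_c1d1 h_c1d2 h_c2d1 h_c2d2
                h3far hKd1 hKd2 hn12 hn21 hbb huniv
          · -- d1 ~ c2, d2 ~ c1
            have hn11 : ¬ H.Adj (.inr d1) (.inr c1) := fun h => hnotboth1 ⟨h, h12⟩
            have hn22 : ¬ H.Adj (.inr d2) (.inr c2) := fun h => hnotboth2 ⟨h21, h⟩
            by_cases hbb : H.Adj (.inr d1) (.inr d2)
            · obtain ⟨v1, hv1⟩ := hc1C
              obtain ⟨v2, hv2⟩ := hc2C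
              have hv12ne : v2 ≠ v1 := by
                rintro rfl
                exact hd12close (edist_le_two_chain hv1 (SimpleGraph.Adj.symm hv2))
              exact aux_diff_adj hrad3 hcount hecc3 hdK hdc2 hdc1 hv2 hv1
                (aK v2 v1 hv12ne) h12 h21 hbb (univ_swap12 huniv)
            · exact aux_diff_nonadj hrad3 hcount (Ne.symm hc12) h_c2d1 h_c2d2 h_c1d1 h_c1d2
                (by rw [SimpleGraph.edist_comm]; exact h3far) hKd1 hKd2 hn11 hn22 hbb
                (univ_swap12 huniv)
          · -- d1 ~ c2, d2 ~ c2
            exact aux_gate2 hrad3 hcount h_c2d1 h_c2d2 h_c1d1 h_c1d2 hd12ne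
              h3far hKd1 hKd2
              (fun h => hnotboth1 ⟨SimpleGraph.Adj.symm h, h12⟩)
              (fun h => hnotboth2 ⟨SimpleGraph.Adj.symm h, h22⟩)
              (univ_swap12 huniv)
      · -- d2 has no C-neighbour; d1 has one
        push_neg at hb2or
        obtain ⟨hno21, hno22⟩ := hb2or
        have hadj21 : H.Adj (.inr d2) (.inr d1) := by
          obtain ⟨y, hy⟩ := hnbr (.inr d2)
          rcases y with v | a
          · exact absurd hy (hBnoadj d2 hd2B v)
          · rcases huniv a with h | h | h | h <;> rw [h] at hy
            · exact absurd hy hno21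
            · exact absurd hy hno22
            · exact hy
            · exact absurd hy (H.loopless.irrefl _)
        rcases hb1or with h11 | h12
        · by_cases h1c2 : H.Adj (.inr d1) (.inr c2)
          · -- d1 adjacent to both c1 c2: ecc c1 ≤ 2
            have hecc2 : ecc H (.inr c1) ≤ 2 := by
              apply ecc_le
              rintro (u | a)
              · exact hdc1 u
              · rcases huniv a with h | h | h | h <;> rw [h]
                · simp [SimpleGraph.edist_self]
                · exact edist_le_two_chain (SimpleGraph.Adj.symm h11) h1c2
                · exact (adj_edist_le_one (SimpleGraph.Adj.symm h11)).trans (by norm_num)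
                · exact edist_le_two_chain (SimpleGraph.Adj.symm h11) (SimpleGraph.Adj.symm hadj21)
            have := (hecc3 (.inr c1)).trans hecc2
            norm_num at this
          · -- d1 ~ c1 only : aux_caseI with c=c1, c'=c2, b=d2, β=d1
            exact aux_caseI hrad3 hcount hecc3 h_c1d2 h_c1d1 h_c2d2 h_c2d1 (Ne.symm hd12ne)
              hdc1 hKd2 hKd1 hno21 hno22 h11 h1c2 hadj21 (univ_swap34 huniv)
        · by_cases h1c1 : H.Adj (.inr d1) (.inr c1)
          · have hecc2 : ecc H (.inr c1) ≤ 2 := by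
              apply ecc_le
              rintro (u | a)
              · exact hdc1 u
              · rcases huniv a with h | h | h | h <;> rw [h]
                · simp [SimpleGraph.edist_self]
                · exact edist_le_two_chain (SimpleGraph.Adj.symm h1c1) h12
                · exact (adj_edist_le_one (SimpleGraph.Adj.symm h1c1)).trans (by norm_num)
                · exact edist_le_two_chain (SimpleGraph.Adj.symm h1c1) (SimpleGraph.Adj.symm hadj21)
            have := (hecc3 (.inr c1)).trans hecc2
            norm_num at this
          · -- d1 ~ c2 only : aux_caseI with c=c2, c'=c1, b=d2, β=d1
            exact aux_caseI hrad3 hcount hecc3 h_c2d2 h_c2d1 h_c1d2 h_c1d1 (Ne.symm hd12ne)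
              hdc2 hKd2 hKd1 hno22 hno21 h12 h1c1 hadj21
              (univ_swap12 (univ_swap34 huniv))
    · -- d1 has no C-neighbour
      push_neg at hb1or
      obtain ⟨hno11, hno12⟩ := hb1or
      have hadj12 : H.Adj (.inr d1) (.inr d2) := by
        obtain ⟨y, hy⟩ := hnbr (.inr d1)
        rcases y with v | a
        · exact absurd hy (hBnoadj d1 hd1B v)
        · rcases huniv a with h | h | h | h <;> rw [h] at hy
          · exact absurd hy hno11
          · exact absurd hy hno12
          · exact absurd hy (H.loopless.irrefl _)
          · exact hy
      by_cases h2c1 : H.Adj (.inr d2) (.inr c1)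
      · by_cases h2c2 : H.Adj (.inr d2) (.inr c2)
        · -- d2 adjacent to both
          have hecc2 : ecc H (.inr c1) ≤ 2 := by
            apply ecc_le
            rintro (u | a)
            · exact hdc1 u
            · rcases huniv a with h | h | h | h <;> rw [h]
              · simp [SimpleGraph.edist_self]
              · exact edist_le_two_chain (SimpleGraph.Adj.symm h2c1) h2c2
              · exact edist_le_two_chain (SimpleGraph.Adj.symm h2c1) (SimpleGraph.Adj.symm hadj12)
              · exact (adj_edist_le_one (SimpleGraph.Adj.symm h2c1)).trans (by norm_num)
          have := (hecc3 (.inr c1)).trans hecc2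
          norm_num at this
        · -- d2 ~ c1 only: aux_caseI c=c1, c'=c2, b=d1, β=d2
          exact aux_caseI hrad3 hcount hecc3 h_c1d1 h_c1d2 h_c2d1 h_c2d2 hd12ne
            hdc1 hKd1 hKd2 hno11 hno12 h2c1 h2c2 hadj12 huniv
      · by_cases h2c2 : H.Adj (.inr d2) (.inr c2)
        · -- d2 ~ c2 only: aux_caseI c=c2, c'=c1, b=d1, β=d2
          exact aux_caseI hrad3 hcount hecc3 h_c2d1 h_c2d2 h_c1d1 h_c1d2 hd12ne
            hdc2 hKd1 hKd2 hno12 hno11 h2c2 h2c1 hadj12 (univ_swap12 huniv)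
        · -- neither d1 nor d2 has a C-neighbour: disconnected
          have hclosed : ∀ x y : Fin n ⊕ Fin k, H.Adj x y →
              y ∈ ({x | x = .inr d1 ∨ x = .inr d2} : Set (Fin n ⊕ Fin k)) →
              x ∈ ({x | x = .inr d1 ∨ x = .inr d2} : Set (Fin n ⊕ Fin k)) := by
            rintro x y hxy (rfl | rfl)
            · rcases x with v | a
              · exact absurd hxy (hKd1 v)
              · rcases huniv a with h | h | h | h <;> rw [h] at hxy ⊢
                · exact absurd (SimpleGraph.Adj.symm hxy) hno11
                · exact absurd (SimpleGraph.Adj.symm hxy) hno12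
                · exact Or.inl rfl
                · exact Or.inr rfl
            · rcases x with v | a
              · exact absurd hxy (hKd2 v)
              · rcases huniv a with h | h | h | h <;> rw [h] at hxy ⊢
                · exact absurd (SimpleGraph.Adj.symm hxy) h2c1
                · exact absurd (SimpleGraph.Adj.symm hxy) h2c2
                · exact Or.inl rfl
                · exact Or.inr rfl
          exact closed_not_reachable hclosed
            (by rintro (h | h) <;> exact nomatch h) (Or.inl rfl)
            (hconn.preconnected (.inl z) (.inr d1))

end Lower

/-- For every integer `n ≥ 2`, the 3-ASC index of the complete graph `K_n` equals 5. -/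
theorem theta_three_complete (n : ℕ) (hn : 2 ≤ n) :
    theta 3 (⊤ : SimpleGraph (Fin n)) = 5 := by
  obtain ⟨H, hASC, hind⟩ := upper_exists n hn
  have hmem : 5 ∈ {k : ℕ | ∃ H : SimpleGraph (Fin n ⊕ Fin k), IsASC 3 H ∧
      ∀ u v : Fin n, H.Adj (Sum.inl u) (Sum.inl v) ↔ (⊤ : SimpleGraph (Fin n)).Adj u v} :=
    ⟨H, hASC, hind⟩
  unfold theta
  apply le_antisymm
  · exact Nat.sInf_le hmem
  · apply le_csInf ⟨5, hmem⟩
    rintro k ⟨H', hASC', hind'⟩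
    refine lower_bound n k hn H' hASC' (fun u v => ?_)
    rw [hind' u v]
    simp


end AscPaper
end

section
/- Let G be a 2-SC graph (every vertex of G has eccentricity 2). If G contains a diametrical pair u, v and vertices u', v' such that u' ∈ N_G(u) \ N_G(v), v' ∈ N_G(v) \ N_G(u), and N_G(u) ∩ N_G(v) ⊆ Ecc_G(u') ∩ Ecc_G(v'), then θ_3(G) = 3. -/
namespace AscPaper

open SimpleGraph

section Helpers
variable {W : Type*} (H : SimpleGraph W)

lemma le_edist_succ {x z : W} (hxz : x ≠ z) {n : ℕ∞}
    (h : ∀ y, H.Adj x y → n ≤ H.edist y z) : n + 1 ≤ H.edist x z := by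
  rw [edist_eq_sInf]
  refine le_sInf ?_
  rintro e ⟨w, rfl⟩
  cases w with
  | nil => exact absurd rfl hxz
  | @cons _ y _ hadj p =>
    have h2 : n ≤ (p.length : ℕ∞) := (h y hadj).trans (edist_le p)
    calc n + 1 ≤ (p.length : ℕ∞) + 1 := add_le_add_left h2 1
      _ = (((Walk.cons hadj p).length : ℕ) : ℕ∞) := by
        simp [Walk.length_cons]

lemma two_le_edist_s6 {x y : W} (hne : x ≠ y) (hadj : ¬ H.Adj x y) :
    (2 : ℕ∞) ≤ H.edist x y := by
  have := le_edist_succ H hne (n := 1) (fun y' hy' => by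
    have : y' ≠ y := fun h => hadj (h ▸ hy')
    exact Order.one_le_iff_pos.mpr (edist_pos_of_ne this))
  simpa [one_add_one_eq_two] using this

lemma edist_hom_le {V' : Type*} {G : SimpleGraph V'} (f : G →g H) (a b : V') :
    H.edist (f a) (f b) ≤ G.edist a b := by
  rw [G.edist_eq_sInf]
  refine le_sInf ?_
  rintro e ⟨w, rfl⟩
  simpa using edist_le (w.map f)

lemma exists_common_of_edist_two {x y : W} (h : H.edist x y = 2) :
    ∃ w, H.Adj x w ∧ H.Adj w y := by
  obtain ⟨p, hp⟩ := exists_walk_of_edist_eq_coe (k := 2) (by exact_mod_cast h)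
  refine ⟨p.getVert 1, ?_, ?_⟩
  · have := p.adj_getVert_succ (i := 0) (by omega)
    simpa using this
  · have := p.adj_getVert_succ (i := 1) (by omega)
    rwa [show (1 + 1 : ℕ) = p.length by omega, p.getVert_length] at this

end Helpers

/-- The 3-vertex extension used for the upper bound: a pendant vertex `inr 0` attached
to `u`, a pendant vertex `inr 1` attached to `v`, and a vertex `inr 2` attached to
`u'` and `v'`. -/
def ext3 {V : Type*} (G : SimpleGraph V) (u v u' v' : V) : SimpleGraph (V ⊕ Fin 3) where
  Adj x y := match x, y with
    | Sum.inl a, Sum.inl b => G.Adj a b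
    | Sum.inl a, Sum.inr i => (i = 0 ∧ a = u) ∨ (i = 1 ∧ a = v) ∨ (i = 2 ∧ (a = u' ∨ a = v'))
    | Sum.inr i, Sum.inl a => (i = 0 ∧ a = u) ∨ (i = 1 ∧ a = v) ∨ (i = 2 ∧ (a = u' ∨ a = v'))
    | Sum.inr _, Sum.inr _ => False
  symm := by
    refine ⟨?_⟩
    rintro (a | i) (b | j) h
    · exact G.adj_symm h
    · exact h
    · exact h
    · exact h
  loopless := by
    refine ⟨?_⟩
    rintro (a | i) h
    · exact G.irrefl h
    · exact h

lemma ext3_isASC {V : Type*} (G : SimpleGraph V) (u v u' v' : V)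
    (hSC : ∀ a, ecc G a = 2)
    (heuv : G.edist u v = 2)
    (hu'1 : G.Adj u u') (hu'2 : ¬ G.Adj v u')
    (hv'1 : G.Adj v v') (hv'2 : ¬ G.Adj u v')
    (hcw : ∀ w, G.Adj u w → G.Adj v w → G.edist u' w = 2 ∧ G.edist v' w = 2) :
    IsASC 3 (ext3 G u v u' v') := by
  set H : SimpleGraph (V ⊕ Fin 3) := ext3 G u v u' v' with hHdef
  have hGle2 : ∀ a b : V, G.edist a b ≤ 2 := fun a b =>
    (hSC a) ▸ le_iSup (fun b => G.edist a b) b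
  have ne_of_e2 : ∀ {x y : V}, G.edist x y = 2 → x ≠ y ∧ ¬ G.Adj x y := by
    intro x y e
    constructor
    · rintro rfl; rw [SimpleGraph.edist_self] at e; norm_num at e
    · intro h; rw [edist_eq_one_iff_adj.mpr h] at e; norm_num at e
  obtain ⟨hune, hnuv⟩ := ne_of_e2 heuv
  -- basic adjacencies in H
  have hPu : H.Adj (Sum.inr 0) (Sum.inl u) := Or.inl ⟨rfl, rfl⟩
  have hQv : H.Adj (Sum.inr 1) (Sum.inl v) := Or.inr (Or.inl ⟨rfl, rfl⟩)
  have hSu' : H.Adj (Sum.inr 2) (Sum.inl u') := Or.inr (Or.inr ⟨rfl, Or.inl rfl⟩)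
  have hSv' : H.Adj (Sum.inr 2) (Sum.inl v') := Or.inr (Or.inr ⟨rfl, Or.inr rfl⟩)
  have hinl : ∀ {a b : V}, G.Adj a b → H.Adj (Sum.inl a) (Sum.inl b) := fun h => h
  have hadj1 : ∀ {x y : V ⊕ Fin 3}, H.Adj x y → H.edist x y ≤ 1 :=
    fun h => le_of_eq (edist_eq_one_iff_adj.mpr h)
  -- neighbor characterizations
  have hnbr0 : ∀ y, H.Adj (Sum.inr 0) y → y = Sum.inl u := by
    rintro (a | j) h
    · rcases h with ⟨_, rfl⟩ | ⟨h0, _⟩ | ⟨h0, _⟩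
      · rfl
      · exact absurd h0 (by decide)
      · exact absurd h0 (by decide)
    · exact absurd h (by exact fun h => h)
  have hnbr1 : ∀ y, H.Adj (Sum.inr 1) y → y = Sum.inl v := by
    rintro (a | j) h
    · rcases h with ⟨h0, _⟩ | ⟨_, rfl⟩ | ⟨h0, _⟩
      · exact absurd h0 (by decide)
      · rfl
      · exact absurd h0 (by decide)
    · exact absurd h (by exact fun h => h)
  have hnbr2 : ∀ y, H.Adj (Sum.inr 2) y → y = Sum.inl u' ∨ y = Sum.inl v' := by
    rintro (a | j) h
    · rcases h with ⟨h0, _⟩ | ⟨h0, _⟩ | ⟨_, rfl | rfl⟩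
      · exact absurd h0 (by decide)
      · exact absurd h0 (by decide)
      · exact Or.inl rfl
      · exact Or.inr rfl
    · exact absurd h (by exact fun h => h)
  -- distances within V
  have hH2 : ∀ a b : V, H.edist (Sum.inl a) (Sum.inl b) ≤ 2 := fun a b =>
    (edist_hom_le H ⟨Sum.inl, fun h => hinl h⟩ a b).trans (hGle2 a b)
  -- distance upper bounds to the new vertices
  have hdP : ∀ a : V, H.edist (Sum.inl a) (Sum.inr 0) ≤ 3 := by
    intro a
    calc H.edist (Sum.inl a) (Sum.inr 0)
        ≤ H.edist (Sum.inl a) (Sum.inl u) + H.edist (Sum.inl u) (Sum.inr 0) :=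
          SimpleGraph.edist_triangle
      _ ≤ 2 + 1 := add_le_add (hH2 _ _) (hadj1 hPu.symm)
      _ = 3 := by norm_num
  have hdQ : ∀ a : V, H.edist (Sum.inl a) (Sum.inr 1) ≤ 3 := by
    intro a
    calc H.edist (Sum.inl a) (Sum.inr 1)
        ≤ H.edist (Sum.inl a) (Sum.inl v) + H.edist (Sum.inl v) (Sum.inr 1) :=
          SimpleGraph.edist_triangle
      _ ≤ 2 + 1 := add_le_add (hH2 _ _) (hadj1 hQv.symm)
      _ = 3 := by norm_num
  have hdS : ∀ a : V, H.edist (Sum.inl a) (Sum.inr 2) ≤ 3 := by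
    intro a
    calc H.edist (Sum.inl a) (Sum.inr 2)
        ≤ H.edist (Sum.inl a) (Sum.inl u') + H.edist (Sum.inl u') (Sum.inr 2) :=
          SimpleGraph.edist_triangle
      _ ≤ 2 + 1 := add_le_add (hH2 _ _) (hadj1 hSu'.symm)
      _ = 3 := by norm_num
  have hdPS : H.edist (Sum.inr 0) (Sum.inr 2) ≤ 3 := by
    calc H.edist (Sum.inr 0) (Sum.inr 2)
        ≤ H.edist (Sum.inr 0) (Sum.inl u) + H.edist (Sum.inl u) (Sum.inl u')
          + H.edist (Sum.inl u') (Sum.inr 2) :=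
          le_trans SimpleGraph.edist_triangle
            (add_le_add_left SimpleGraph.edist_triangle _)
      _ ≤ 1 + 1 + 1 := add_le_add (add_le_add (hadj1 hPu) (hadj1 (hinl hu'1))) (hadj1 hSu'.symm)
      _ = 3 := by norm_num
  have hdQS : H.edist (Sum.inr 1) (Sum.inr 2) ≤ 3 := by
    calc H.edist (Sum.inr 1) (Sum.inr 2)
        ≤ H.edist (Sum.inr 1) (Sum.inl v) + H.edist (Sum.inl v) (Sum.inl v')
          + H.edist (Sum.inl v') (Sum.inr 2) :=
          le_trans SimpleGraph.edist_triangle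
            (add_le_add_left SimpleGraph.edist_triangle _)
      _ ≤ 1 + 1 + 1 := add_le_add (add_le_add (hadj1 hQv) (hadj1 (hinl hv'1))) (hadj1 hSv'.symm)
      _ = 3 := by norm_num
  have hdPQ : H.edist (Sum.inr 0) (Sum.inr 1) ≤ 4 := by
    calc H.edist (Sum.inr 0) (Sum.inr 1)
        ≤ H.edist (Sum.inr 0) (Sum.inl u) + H.edist (Sum.inl u) (Sum.inl v)
          + H.edist (Sum.inl v) (Sum.inr 1) :=
          le_trans SimpleGraph.edist_triangle
            (add_le_add_left SimpleGraph.edist_triangle _)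
      _ ≤ 1 + 2 + 1 := add_le_add (add_le_add (hadj1 hPu) (hH2 _ _)) (hadj1 hQv.symm)
      _ = 4 := by norm_num
  -- distance lower bounds
  have two_le' : ∀ a b : V, a ≠ b → ¬ G.Adj a b → (2:ℕ∞) ≤ H.edist (Sum.inl a) (Sum.inl b) :=
    fun a b hne hnadj => two_le_edist_s6 H (fun h => hne (Sum.inl.inj h)) hnadj
  have lbP : ∀ a : V, a ≠ u → ¬ G.Adj a u → (3:ℕ∞) ≤ H.edist (Sum.inr 0) (Sum.inl a) := by
    intro a hne hnadj
    have := le_edist_succ H (x := Sum.inr 0) (z := Sum.inl a) (by simp) (n := 2) ?_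
    · exact le_of_eq_of_le (by norm_num) this
    · intro y hy
      rw [hnbr0 y hy]
      exact two_le' u a (Ne.symm hne) (fun h => hnadj h.symm)
  have lbQ : ∀ a : V, a ≠ v → ¬ G.Adj a v → (3:ℕ∞) ≤ H.edist (Sum.inr 1) (Sum.inl a) := by
    intro a hne hnadj
    have := le_edist_succ H (x := Sum.inr 1) (z := Sum.inl a) (by simp) (n := 2) ?_
    · exact le_of_eq_of_le (by norm_num) this
    · intro y hy
      rw [hnbr1 y hy]
      exact two_le' v a (Ne.symm hne) (fun h => hnadj h.symm)
  have lbS : ∀ a : V, G.edist u' a = 2 → G.edist v' a = 2 →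
      (3:ℕ∞) ≤ H.edist (Sum.inr 2) (Sum.inl a) := by
    intro a e1 e2
    obtain ⟨hn1, ha1⟩ := ne_of_e2 e1
    obtain ⟨hn2, ha2⟩ := ne_of_e2 e2
    have := le_edist_succ H (x := Sum.inr 2) (z := Sum.inl a) (by simp) (n := 2) ?_
    · exact le_of_eq_of_le (by norm_num) this
    · intro y hy
      rcases hnbr2 y hy with rfl | rfl
      · exact two_le' u' a hn1 ha1
      · exact two_le' v' a hn2 ha2
  have lbPQ : (4:ℕ∞) ≤ H.edist (Sum.inr 0) (Sum.inr 1) := by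
    have := le_edist_succ H (x := Sum.inr 0) (z := Sum.inr 1) (by simp) (n := 3) ?_
    · exact le_of_eq_of_le (by norm_num) this
    · intro y hy
      rw [hnbr0 y hy, SimpleGraph.edist_comm]
      exact lbQ u hune hnuv
  -- eccentricities
  have hecc_inl : ∀ a : V, ecc H (Sum.inl a) = 3 := by
    intro a
    refine le_antisymm ?_ ?_
    · refine iSup_le ?_
      rintro (b | i)
      · exact (hH2 a b).trans (by norm_num)
      · fin_cases i
        · exact hdP a
        · exact hdQ a
        · exact hdS a
    · by_cases h1 : ¬ G.Adj a v ∧ a ≠ v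
      · have hle := lbQ a h1.2 h1.1
        rw [SimpleGraph.edist_comm] at hle
        exact hle.trans (le_iSup (H.edist (Sum.inl a)) (Sum.inr 1))
      · by_cases h2 : ¬ G.Adj a u ∧ a ≠ u
        · have hle := lbP a h2.2 h2.1
          rw [SimpleGraph.edist_comm] at hle
          exact hle.trans (le_iSup (H.edist (Sum.inl a)) (Sum.inr 0))
        · push_neg at h1 h2
          by_cases hav : G.Adj a v
          · by_cases hau : G.Adj a u
            · obtain ⟨e1, e2⟩ := hcw a hau.symm hav.symm
              have hle := lbS a e1 e2
              rw [SimpleGraph.edist_comm] at hle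
              exact hle.trans (le_iSup (H.edist (Sum.inl a)) (Sum.inr 2))
            · rw [h2 hau] at hav
              exact absurd hav hnuv
          · have hva : a = v := h1 hav
            have hnau : ¬ G.Adj a u := by rw [hva]; exact fun h => hnuv h.symm
            rw [h2 hnau] at hva
            exact absurd hva hune
  obtain ⟨w0, hw01, hw02⟩ := exists_common_of_edist_two G heuv
  have hecc_S : ecc H (Sum.inr 2) = 3 := by
    refine le_antisymm ?_ ?_
    · refine iSup_le ?_
      rintro (b | i)
      · calc H.edist (Sum.inr 2) (Sum.inl b)
            ≤ H.edist (Sum.inr 2) (Sum.inl u') + H.edist (Sum.inl u') (Sum.inl b) :=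
              SimpleGraph.edist_triangle
          _ ≤ 1 + 2 := add_le_add (hadj1 hSu') (hH2 _ _)
          _ = 3 := by norm_num
      · fin_cases i
        · rw [SimpleGraph.edist_comm]; exact hdPS
        · rw [SimpleGraph.edist_comm]; exact hdQS
        · simp [SimpleGraph.edist_self]
    · obtain ⟨e1, e2⟩ := hcw w0 hw01 hw02.symm
      exact (lbS w0 e1 e2).trans (le_iSup (H.edist (Sum.inr 2)) (Sum.inl w0))
  have hecc_P : ecc H (Sum.inr 0) = 4 := by
    refine le_antisymm ?_ ?_
    · refine iSup_le ?_
      rintro (b | i)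
      · rw [SimpleGraph.edist_comm]
        exact (hdP b).trans (by norm_num)
      · fin_cases i
        · simp [SimpleGraph.edist_self]
        · exact hdPQ
        · exact hdPS.trans (by norm_num)
    · exact lbPQ.trans (le_iSup (H.edist (Sum.inr 0)) (Sum.inr 1))
  have hecc_Q : ecc H (Sum.inr 1) = 4 := by
    refine le_antisymm ?_ ?_
    · refine iSup_le ?_
      rintro (b | i)
      · rw [SimpleGraph.edist_comm]
        exact (hdQ b).trans (by norm_num)
      · fin_cases i
        · rw [SimpleGraph.edist_comm]; exact hdPQ
        · simp [SimpleGraph.edist_self]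
        · exact hdQS.trans (by norm_num)
    · have := lbPQ
      rw [SimpleGraph.edist_comm] at this
      exact this.trans (le_iSup (H.edist (Sum.inr 1)) (Sum.inr 0))
  -- connectivity
  have hreach : ∀ z, H.Reachable z (Sum.inl u) := by
    intro z
    have hle : H.edist z (Sum.inl u) ≤ 3 := by
      cases z with
      | inl a => exact (hH2 a u).trans (by norm_num)
      | inr i =>
        fin_cases i
        · exact (hadj1 hPu).trans (by norm_num)
        · calc H.edist (Sum.inr 1) (Sum.inl u)
              ≤ H.edist (Sum.inr 1) (Sum.inl v) + H.edist (Sum.inl v) (Sum.inl u) :=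
                SimpleGraph.edist_triangle
            _ ≤ 1 + 2 := add_le_add (hadj1 hQv) (hH2 _ _)
            _ = 3 := by norm_num
        · calc H.edist (Sum.inr 2) (Sum.inl u)
              ≤ H.edist (Sum.inr 2) (Sum.inl u') + H.edist (Sum.inl u') (Sum.inl u) :=
                SimpleGraph.edist_triangle
            _ ≤ 1 + 2 := add_le_add (hadj1 hSu') (hH2 _ _)
            _ = 3 := by norm_num
    refine reachable_of_edist_ne_top (fun h => ?_)
    rw [h] at hle
    exact absurd hle (by simp)
  have hconn : H.Connected :=
    (SimpleGraph.connected_iff H).mpr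
      ⟨fun x y => (hreach x).trans (hreach y).symm, ⟨Sum.inl u⟩⟩
  -- radius
  have hrad : graphRadius H = 3 := by
    refine le_antisymm ?_ ?_
    · exact (iInf_le (fun t => ecc H t) (Sum.inl u)).trans_eq (hecc_inl u)
    · refine le_iInf ?_
      rintro (a | i)
      · exact (hecc_inl a).ge
      · rcases (by fin_cases i <;> decide : i = 0 ∨ i = 1 ∨ i = 2) with rfl | rfl | rfl
        · rw [hecc_P]; norm_num
        · rw [hecc_Q]; norm_num
        · rw [hecc_S]
  -- the noncentral set
  have hset : {t : V ⊕ Fin 3 | ecc H t ≠ graphRadius H} = {Sum.inr 0, Sum.inr 1} := by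
    ext t
    cases t with
    | inl a =>
      simp only [Set.mem_setOf_eq, hecc_inl a, hrad, ne_eq, not_true_eq_false,
        Set.mem_insert_iff, Set.mem_singleton_iff]
      simp
    | inr i =>
      rcases (by fin_cases i <;> decide : i = 0 ∨ i = 1 ∨ i = 2) with rfl | rfl | rfl
      · simp only [Set.mem_setOf_eq, hecc_P, hrad, ne_eq, Set.mem_insert_iff,
          Set.mem_singleton_iff]
        norm_num
      · simp only [Set.mem_setOf_eq, hecc_Q, hrad, ne_eq, Set.mem_insert_iff,
          Set.mem_singleton_iff]
        norm_num
      · simp only [Set.mem_setOf_eq, hecc_S, hrad, ne_eq, Set.mem_insert_iff,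
          Set.mem_singleton_iff]
        simp
  refine ⟨hconn, by rw [hrad]; norm_num, ?_⟩
  rw [hset, Set.ncard_pair (by simp : (Sum.inr 0 : V ⊕ Fin 3) ≠ Sum.inr 1)]

/-- No 3-ASC extension of a 2-SC graph with fewer than 3 added vertices. -/
lemma not_small {V : Type*} (G : SimpleGraph V) (hSC : ∀ a, ecc G a = 2) (v0 : V)
    {k : ℕ} (hk : k < 3) (H : SimpleGraph (V ⊕ Fin k)) (hasc : IsASC 3 H)
    (hind : ∀ a b : V, H.Adj (Sum.inl a) (Sum.inl b) ↔ G.Adj a b) : False := by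
  have hGle2 : ∀ a b : V, G.edist a b ≤ 2 := fun a b =>
    (hSC a) ▸ le_iSup (fun b => G.edist a b) b
  have hd2 : ∀ a b : V, H.edist (Sum.inl a) (Sum.inl b) ≤ 2 := fun a b =>
    (edist_hom_le H ⟨Sum.inl, fun h => (hind _ _).mpr h⟩ a b).trans (hGle2 a b)
  have hrad : graphRadius H = 3 := by
    have := hasc.2.1; rwa [Nat.cast_ofNat] at this
  have hr : ∀ t, (3 : ℕ∞) ≤ ecc H t := fun t => hrad ▸ iInf_le (fun t => ecc H t) t
  have hadj1 : ∀ {x y : V ⊕ Fin k}, H.Adj x y → H.edist x y ≤ 1 :=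
    fun h => le_of_eq (edist_eq_one_iff_adj.mpr h)
  -- a vertex of V that is within distance 2 of every extra vertex has ecc ≤ 2 < 3
  have hsmall : ∀ a : V, (∀ i : Fin k, H.edist (Sum.inl a) (Sum.inr i) ≤ 2) → False := by
    intro a h
    have h2 : ecc H (Sum.inl a) ≤ 2 := by
      refine iSup_le ?_
      rintro (b | i)
      · exact hd2 a b
      · exact h i
    have := (hr (Sum.inl a)).trans h2
    norm_num at this
  interval_cases k
  · -- k = 0
    exact hsmall v0 (fun i => i.elim0)
  · -- k = 1
    obtain ⟨w⟩ : H.Reachable (Sum.inr 0) (Sum.inl v0) := hasc.1.preconnected _ _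
    obtain ⟨a0, ha0⟩ : ∃ a0 : V, H.Adj (Sum.inr 0) (Sum.inl a0) := by
      cases w with
      | @cons _ y _ hadj p =>
        cases y with
        | inl a => exact ⟨a, hadj⟩
        | inr j =>
          exact absurd hadj (by rw [Subsingleton.elim j 0]; exact H.irrefl)
    -- now compute that every vertex has ecc ≤ 3, in fact the noncentral set is empty
    have hd3 : ∀ a : V, H.edist (Sum.inl a) (Sum.inr 0) ≤ 3 := by
      intro a
      calc H.edist (Sum.inl a) (Sum.inr 0)
          ≤ H.edist (Sum.inl a) (Sum.inl a0) + H.edist (Sum.inl a0) (Sum.inr 0) :=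
            SimpleGraph.edist_triangle
        _ ≤ 2 + 1 := add_le_add (hd2 _ _) (hadj1 ha0.symm)
        _ = 3 := by norm_num
    have hecc : ∀ t, ecc H t = 3 := by
      intro t
      refine le_antisymm ?_ (hr t)
      refine iSup_le ?_
      rintro (b | i)
      · cases t with
        | inl a => exact (hd2 a b).trans (by norm_num)
        | inr j =>
          rw [Subsingleton.elim j 0, SimpleGraph.edist_comm]
          exact hd3 b
      · rw [Subsingleton.elim i 0]
        cases t with
        | inl a => exact hd3 a
        | inr j =>
          rw [Subsingleton.elim j 0]
          simp [edist_self]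
    have : {t : V ⊕ Fin 1 | ecc H t ≠ graphRadius H} = ∅ := by
      ext t; simp [hecc t, hrad]
    have h22 := hasc.2.2
    rw [this] at h22
    simp at h22
  · -- k = 2
    have key : ∀ i o : Fin 2, i ≠ o → (∀ j : Fin 2, j = i ∨ j = o) →
        (∀ a : V, ¬H.Adj (Sum.inr i) (Sum.inl a)) → False := by
      intro i o hio hcov hno
      obtain ⟨w⟩ : H.Reachable (Sum.inr i) (Sum.inl v0) := hasc.1.preconnected _ _
      have hXY : H.Adj (Sum.inr i) (Sum.inr o) := by
        cases w with
        | @cons _ y _ hadj p =>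
          cases y with
          | inl a => exact absurd hadj (hno a)
          | inr j =>
            rcases hcov j with rfl | rfl
            · exact absurd hadj H.irrefl
            · exact hadj
      by_cases hoc : ∃ c, H.Adj (Sum.inr o) (Sum.inl c)
      · obtain ⟨c, hc⟩ := hoc
        refine hsmall c (fun j => ?_)
        rcases hcov j with rfl | rfl
        · calc H.edist (Sum.inl c) (Sum.inr j)
              ≤ H.edist (Sum.inl c) (Sum.inr o) + H.edist (Sum.inr o) (Sum.inr j) :=
                SimpleGraph.edist_triangle
            _ ≤ 1 + 1 := add_le_add (hadj1 hc.symm) (hadj1 hXY.symm)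
            _ = 2 := by norm_num
        · exact (hadj1 hc.symm).trans (by norm_num)
      · push_neg at hoc
        have claim : ∀ n : ℕ, (n : ℕ∞) ≤ H.edist (Sum.inr i) (Sum.inl v0) ∧
            (n : ℕ∞) ≤ H.edist (Sum.inr o) (Sum.inl v0) := by
          intro n
          induction n with
          | zero => exact ⟨zero_le, zero_le⟩
          | succ n ih =>
            have step : ∀ z z' : Fin 2, (∀ a : V, ¬H.Adj (Sum.inr z) (Sum.inl a)) →
                (∀ j : Fin 2, j = z ∨ j = z') →
                (n : ℕ∞) ≤ H.edist (Sum.inr z') (Sum.inl v0) →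
                ((n : ℕ) + 1 : ℕ∞) ≤ H.edist (Sum.inr z) (Sum.inl v0) := by
              intro z z' hz hcv hle
              refine le_edist_succ H (by simp) ?_
              rintro (a | j) hy
              · exact absurd hy (hz a)
              · rcases hcv j with rfl | rfl
                · exact absurd hy H.irrefl
                · exact hle
            constructor
            · push_cast
              exact step i o hno hcov ih.2
            · push_cast
              refine step o i hoc (fun j => (hcov j).symm) ih.1
        have hne : H.edist (Sum.inr i) (Sum.inl v0) ≠ ⊤ :=
          edist_ne_top_iff_reachable.mpr (hasc.1.preconnected _ _)
        lift H.edist (Sum.inr i) (Sum.inl v0) to ℕ using hne with m hm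
        have := (claim (m + 1)).1
        exact absurd this (by exact_mod_cast by omega)
    obtain ⟨a0, ha0⟩ : ∃ a : V, H.Adj (Sum.inr 0) (Sum.inl a) := by
      by_contra h; push_neg at h
      exact key 0 1 (by decide) (by decide) h
    obtain ⟨b0, hb0⟩ : ∃ b : V, H.Adj (Sum.inr 1) (Sum.inl b) := by
      by_contra h; push_neg at h
      exact key 1 0 (by decide) (by decide) h
    have hd3 : ∀ (a : V) (j : Fin 2), H.edist (Sum.inl a) (Sum.inr j) ≤ 3 := by
      intro a j
      fin_cases j
      · calc H.edist (Sum.inl a) (Sum.inr 0)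
            ≤ H.edist (Sum.inl a) (Sum.inl a0) + H.edist (Sum.inl a0) (Sum.inr 0) :=
              SimpleGraph.edist_triangle
          _ ≤ 2 + 1 := add_le_add (hd2 _ _) (hadj1 ha0.symm)
          _ = 3 := by norm_num
      · calc H.edist (Sum.inl a) (Sum.inr 1)
            ≤ H.edist (Sum.inl a) (Sum.inl b0) + H.edist (Sum.inl b0) (Sum.inr 1) :=
              SimpleGraph.edist_triangle
          _ ≤ 2 + 1 := add_le_add (hd2 _ _) (hadj1 hb0.symm)
          _ = 3 := by norm_num
    have hecc_inl : ∀ a : V, ecc H (Sum.inl a) = 3 := by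
      intro a
      refine le_antisymm ?_ (hr _)
      refine iSup_le ?_
      rintro (b | j)
      · exact (hd2 a b).trans (by norm_num)
      · exact hd3 a j
    have hXnc : ∀ i : Fin 2, ecc H (Sum.inr i) ≠ graphRadius H := by
      intro i hc
      have hsub : {t : V ⊕ Fin 2 | ecc H t ≠ graphRadius H} ⊆ {Sum.inr (1 - i)} := by
        rintro (a | j) ht
        · exact absurd (by rw [hecc_inl a, hrad]) ht
        · rcases (by omega : j = i ∨ j = 1 - i) with rfl | rfl
          · exact absurd hc ht
          · rfl
      have := Set.ncard_le_ncard hsub (Set.finite_singleton _)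
      rw [hasc.2.2, Set.ncard_singleton] at this
      omega
    have hXY4 : (4 : ℕ∞) ≤ H.edist (Sum.inr 0) (Sum.inr 1) := by
      by_contra hlt
      have h4 : (4 : ℕ∞) ≤ ecc H (Sum.inr 0) := by
        have h3 := hr (Sum.inr 0)
        have : (3 : ℕ∞) < ecc H (Sum.inr 0) :=
          lt_of_le_of_ne h3 (fun h => hXnc 0 (by rw [hrad]; exact h.symm))
        have := Order.add_one_le_of_lt this
        norm_num at this ⊢
        exact this
      have hle : ecc H (Sum.inr 0) ≤ 3 := by
        refine iSup_le ?_
        rintro (a | j)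
        · rw [SimpleGraph.edist_comm]; exact hd3 a 0
        · have hle3 : ∀ e : ℕ∞, e < 4 → e ≤ 3 := by
            intro e he
            cases e with
            | top => exact absurd he (by simp)
            | coe m => exact_mod_cast Nat.le_of_lt_succ (by exact_mod_cast he)
          fin_cases j
          · simp [SimpleGraph.edist_self]
          · exact hle3 _ (not_le.mp hlt)
      exact absurd (h4.trans hle) (by norm_num)
    have hne0 : a0 ≠ b0 := by
      rintro rfl
      have : H.edist (Sum.inr 0) (Sum.inr 1) ≤ 2 := by
        calc H.edist (Sum.inr 0) (Sum.inr 1)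
            ≤ H.edist (Sum.inr 0) (Sum.inl a0) + H.edist (Sum.inl a0) (Sum.inr 1) :=
              SimpleGraph.edist_triangle
          _ ≤ 1 + 1 := add_le_add (hadj1 ha0) (hadj1 hb0.symm)
          _ = 2 := by norm_num
      exact absurd (hXY4.trans this) (by norm_num)
    have hnadj : ¬G.Adj a0 b0 := by
      intro h
      have : H.edist (Sum.inr 0) (Sum.inr 1) ≤ 3 := by
        calc H.edist (Sum.inr 0) (Sum.inr 1)
            ≤ H.edist (Sum.inr 0) (Sum.inl a0) + H.edist (Sum.inl a0) (Sum.inl b0)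
              + H.edist (Sum.inl b0) (Sum.inr 1) :=
              le_trans SimpleGraph.edist_triangle
                (add_le_add_left SimpleGraph.edist_triangle _)
          _ ≤ 1 + 1 + 1 := by
              refine add_le_add (add_le_add (hadj1 ha0) (hadj1 ?_)) (hadj1 hb0.symm)
              exact (hind a0 b0).mpr h
          _ = 3 := by norm_num
      exact absurd (hXY4.trans this) (by norm_num)
    have hG2 : G.edist a0 b0 = 2 := le_antisymm (hGle2 _ _) (two_le_edist_s6 G hne0 hnadj)
    obtain ⟨w, hw1, hw2⟩ := exists_common_of_edist_two G hG2
    refine hsmall w (fun j => ?_)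
    fin_cases j
    · calc H.edist (Sum.inl w) (Sum.inr 0)
          ≤ H.edist (Sum.inl w) (Sum.inl a0) + H.edist (Sum.inl a0) (Sum.inr 0) :=
            SimpleGraph.edist_triangle
        _ ≤ 1 + 1 := add_le_add (hadj1 ((hind w a0).mpr hw1.symm)) (hadj1 ha0.symm)
        _ = 2 := by norm_num
    · calc H.edist (Sum.inl w) (Sum.inr 1)
          ≤ H.edist (Sum.inl w) (Sum.inl b0) + H.edist (Sum.inl b0) (Sum.inr 1) :=
            SimpleGraph.edist_triangle
        _ ≤ 1 + 1 := add_le_add (hadj1 ((hind w b0).mpr hw2)) (hadj1 hb0.symm)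
        _ = 2 := by norm_num

/-- Let `G` be a 2-SC graph (every vertex has eccentricity 2). If `G` contains a
diametrical pair `u, v` and vertices `u' ∈ N(u) \ N(v)`, `v' ∈ N(v) \ N(u)` with
`N(u) ∩ N(v) ⊆ Ecc(u') ∩ Ecc(v')`, then `θ_3(G) = 3`. -/
theorem theta_three_of_two_SC {V : Type*} [Fintype V] (G : SimpleGraph V)
    (hSC : ∀ u, ecc G u = 2)
    (u v u' v' : V)
    (huv : G.edist u v = graphDiam G)
    (hu' : u' ∈ G.neighborSet u \ G.neighborSet v)
    (hv' : v' ∈ G.neighborSet v \ G.neighborSet u)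
    (hsub : G.neighborSet u ∩ G.neighborSet v ⊆ eccSet G u' ∩ eccSet G v') :
    theta 3 G = 3 := by
  have hdiam : graphDiam G = 2 := by
    refine le_antisymm (iSup_le fun a => (hSC a).le) ?_
    exact (hSC u) ▸ le_iSup (fun a => ecc G a) u
  have heuv : G.edist u v = 2 := by rw [huv, hdiam]
  have hu'1 : G.Adj u u' := hu'.1
  have hu'2 : ¬ G.Adj v u' := hu'.2
  have hv'1 : G.Adj v v' := hv'.1
  have hv'2 : ¬ G.Adj u v' := hv'.2
  have hcw : ∀ w, G.Adj u w → G.Adj v w → G.edist u' w = 2 ∧ G.edist v' w = 2 := by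
    intro w h1 h2
    obtain ⟨e1, e2⟩ := hsub ⟨h1, h2⟩
    simp only [eccSet, Set.mem_setOf_eq] at e1 e2
    rw [hSC u'] at e1
    rw [hSC v'] at e2
    exact ⟨e1, e2⟩
  have hASC : IsASC 3 (ext3 G u v u' v') :=
    ext3_isASC G u v u' v' hSC heuv hu'1 hu'2 hv'1 hv'2 hcw
  have hmem : 3 ∈ {k : ℕ | ∃ H : SimpleGraph (V ⊕ Fin k), IsASC 3 H ∧
      ∀ a b : V, H.Adj (Sum.inl a) (Sum.inl b) ↔ G.Adj a b} :=
    ⟨ext3 G u v u' v', hASC, fun a b => Iff.rfl⟩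
  unfold theta
  refine le_antisymm (Nat.sInf_le hmem) (le_csInf ⟨3, hmem⟩ ?_)
  intro m hm
  by_contra hlt
  push_neg at hlt
  obtain ⟨H, hasc, hind⟩ := hm
  exact not_small G hSC u hlt H hasc hind

end AscPaper
end
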